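/- arXiv:1502.06372 — 6 statements merged into one kernel-verified Lean document; each statement's English description precedes it below -/
import Mathlib

section
/- Let p ≥ 1, m = 2^p, and let k, l ∈ {0, …, m−1} with k ≠ l. For i, j ∈ {0, …, m−1} let S(i,j) be the 2×2 matrix with rows (H(m)_{i,k}, H(m)_{i,l}) and (H(m)_{j,k}, H(m)_{j,l}). Then the number of pairs (i,j) with 0 ≤ i ≤ j ≤ m−1 and perm S(i,j) = 0 equals m²/4, independently of the choice of the input pair (k,l). -/
/-- The `2^p × 2^p` Sylvester matrix over `ℤ`: entry `(i,j)` is `(−1)^(i⊙j)`,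
where `i⊙j` is the bitwise dot product (number of positions where both binary
expansions have a 1, i.e. the popcount of `i &&& j`). -/
def sylv (p : ℕ) : Matrix (Fin (2^p)) (Fin (2^p)) ℤ :=
  fun i j => (-1 : ℤ) ^ (((Finset.range p).filter
    (fun t => Nat.testBit (i.val &&& j.val) t)).card)

/-- The permanent of a square integer matrix: `perm A = Σ_σ ∏_i A_{i,σ(i)}`. -/
def perm {n : ℕ} (A : Matrix (Fin n) (Fin n) ℤ) : ℤ :=
  ∑ σ : Equiv.Perm (Fin n), ∏ i, A i (σ i)

def cnt (p x y : ℕ) : ℕ :=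
  ((Finset.range p).filter (fun t => Nat.testBit (x &&& y) t)).card

lemma sylv_eq (p : ℕ) (i j : Fin (2^p)) : sylv p i j = (-1:ℤ)^(cnt p i.val j.val) := rfl

lemma perm2 (a b c d : ℤ) : perm !![a,b;c,d] = a*d + b*c := by
  unfold perm
  rw [show (Finset.univ : Finset (Equiv.Perm (Fin 2))) = {Equiv.refl _, Equiv.swap 0 1} from by decide]
  rw [Finset.sum_insert (by decide), Finset.sum_singleton]
  simp [Fin.prod_univ_two]

lemma natCast_zmod2 (n : ℕ) : (n : ZMod 2) = if Even n then 0 else 1 := by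
  rw [← ZMod.natCast_mod]
  rcases Nat.even_or_odd n with h | h
  · simp [Nat.even_iff.mp h, h]
  · simp [Nat.odd_iff.mp h, Nat.not_even_iff_odd.mpr h]

lemma neg_pow_iff (a b : ℕ) : (-1:ℤ)^a + (-1:ℤ)^b = 0 ↔ (a : ZMod 2) ≠ (b : ZMod 2) := by
  rcases Nat.even_or_odd a with ha | ha <;> rcases Nat.even_or_odd b with hb | hb <;>
    simp [ha.neg_one_pow, hb.neg_one_pow, natCast_zmod2, ha, hb, Nat.not_even_iff_odd.mpr]

lemma cnt_cast (p x y : ℕ) :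
    (cnt p x y : ZMod 2) =
      ∑ t ∈ Finset.range p, (if Nat.testBit x t && Nat.testBit y t then (1 : ZMod 2) else 0) := by
  unfold cnt
  rw [Finset.card_filter]
  push_cast
  refine Finset.sum_congr rfl fun t _ => ?_
  rw [Nat.testBit_and]

lemma cnt_xor (p u : ℕ) (hu : u < p) (x y : ℕ) :
    (cnt p (x ^^^ 2^u) y : ZMod 2) = cnt p x y + (if Nat.testBit y u then 1 else 0) := by
  rw [cnt_cast, cnt_cast]
  have : ∀ t ∈ Finset.range p,
      (if Nat.testBit (x ^^^ 2^u) t && Nat.testBit y t then (1 : ZMod 2) else 0)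
      = (if Nat.testBit x t && Nat.testBit y t then (1 : ZMod 2) else 0)
        + (if t = u then (if Nat.testBit y u then 1 else 0) else 0) := by
    intro t _
    rw [Nat.testBit_xor, Nat.testBit_two_pow]
    rcases eq_or_ne t u with rfl | h
    · simp only [decide_eq_true_eq, if_pos rfl]
      cases hx : Nat.testBit x t <;> cases hy : Nat.testBit y t <;> simp_all <;> decide
    · simp [h, (Ne.symm h)]
  rw [Finset.sum_congr rfl this, Finset.sum_add_distrib, Finset.sum_ite_eq' (Finset.range p)]
  simp [hu]

/-- for two bosons entering an arbitrary pair of distinct modes `k ≠ l`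
of the `m = 2^p` mode Sylvester interferometer, the number of unordered output pairs
`(i,j)` whose scattering matrix has vanishing permanent (suppressed outputs) is
`m²/4`, independently of the choice of `(k,l)`. -/
theorem stmt4 (p : ℕ) (hp : 1 ≤ p) (k l : Fin (2^p)) (hkl : k ≠ l) :
    (Finset.univ.filter (fun ij : Fin (2^p) × Fin (2^p) =>
        ij.1 ≤ ij.2 ∧
        perm !![sylv p ij.1 k, sylv p ij.1 l;
                sylv p ij.2 k, sylv p ij.2 l] = 0)).card
      = 2^p * 2^p / 4 := by
  classical
  -- the parity function
  set F : Fin (2^p) → ZMod 2 := fun x => ((cnt p x.val k.val + cnt p x.val l.val : ℕ) : ZMod 2)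
    with hF
  -- permanent vanishing criterion
  have hperm : ∀ i j : Fin (2^p),
      (perm !![sylv p i k, sylv p i l; sylv p j k, sylv p j l] = 0) ↔ F i ≠ F j := by
    intro i j
    rw [sylv_eq, sylv_eq, sylv_eq, sylv_eq, perm2, ← pow_add, ← pow_add, neg_pow_iff, hF]
    push_cast
    have key : ∀ a b c d : ZMod 2, (a + d ≠ b + c ↔ a + b ≠ c + d) := by decide
    exact key _ _ _ _
  -- a bit where k and l differ
  obtain ⟨u, hbit⟩ : ∃ u, Nat.testBit k.val u ≠ Nat.testBit l.val u := by
    by_contra h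
    push_neg at h
    exact hkl (Fin.ext (Nat.eq_of_testBit_eq h))
  have hu : u < p := by
    by_contra h
    push_neg at h
    have hk : Nat.testBit k.val u = false :=
      Nat.testBit_lt_two_pow (lt_of_lt_of_le k.isLt (Nat.pow_le_pow_right (by norm_num) h))
    have hl : Nat.testBit l.val u = false :=
      Nat.testBit_lt_two_pow (lt_of_lt_of_le l.isLt (Nat.pow_le_pow_right (by norm_num) h))
    exact hbit (hk.trans hl.symm)
  -- the flipping involution
  have h2u : 2^u < 2^p := Nat.pow_lt_pow_right one_lt_two hu
  set e : Fin (2^p) → Fin (2^p) := fun x => ⟨x.val ^^^ 2^u, Nat.xor_lt_two_pow x.isLt h2u⟩ with he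
  have hee : ∀ x, e (e x) = x := by
    intro x
    apply Fin.ext
    simp [he, Nat.xor_assoc, Nat.xor_self]
  have hFe : ∀ x, F (e x) = F x + 1 := by
    intro x
    rw [hF]
    push_cast
    show (cnt p (x.val ^^^ 2^u) k.val : ZMod 2) + cnt p (x.val ^^^ 2^u) l.val = _
    rw [cnt_xor p u hu, cnt_xor p u hu]
    cases hk : Nat.testBit k.val u <;> cases hl : Nat.testBit l.val u <;> simp_all <;> ring
  -- the two fibers
  set A : Finset (Fin (2^p)) := Finset.univ.filter (fun x => F x = 0) with hA
  set B : Finset (Fin (2^p)) := Finset.univ.filter (fun x => F x = 1) with hB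
  have h01 : ∀ x : ZMod 2, x ≠ 0 → x = 1 := by decide
  have h10 : ∀ x : ZMod 2, x ≠ 1 → x = 0 := by decide
  have hcardAB : A.card = B.card := by
    refine Finset.card_bij' (fun x _ => e x) (fun x _ => e x) ?_ ?_ ?_ ?_
    · intro x hx
      rw [hA, Finset.mem_filter] at hx
      rw [hB, Finset.mem_filter]
      exact ⟨Finset.mem_univ _, by rw [hFe, hx.2]; decide⟩
    · intro x hx
      rw [hB, Finset.mem_filter] at hx
      rw [hA, Finset.mem_filter]
      refine ⟨Finset.mem_univ _, ?_⟩
      have := hFe x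
      rw [hx.2] at this
      rw [this]; decide
    · intro x _; exact hee x
    · intro x _; exact hee x
  have hsum : A.card + B.card = 2^p := by
    have h := Finset.card_filter_add_card_filter_not (s := (Finset.univ : Finset (Fin (2^p))))
      (fun x => F x = 0)
    have hBeq : (Finset.univ.filter (fun x : Fin (2^p) => ¬ F x = 0)) = B := by
      apply Finset.filter_congr
      intro x _
      constructor
      · exact h01 _
      · intro h1; rw [h1]; decide
    rw [hBeq] at h
    rw [hA, h, Finset.card_univ, Fintype.card_fin]
  -- rewrite the filter
  have hfilter : (Finset.univ.filter (fun ij : Fin (2^p) × Fin (2^p) =>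
        ij.1 ≤ ij.2 ∧
        perm !![sylv p ij.1 k, sylv p ij.1 l;
                sylv p ij.2 k, sylv p ij.2 l] = 0))
      = Finset.univ.filter (fun ij : Fin (2^p) × Fin (2^p) => ij.1 ≤ ij.2 ∧ F ij.1 ≠ F ij.2) := by
    apply Finset.filter_congr
    intro ij _
    rw [hperm ij.1 ij.2]
  rw [hfilter]
  -- bijection with A ×ˢ B
  have hcard : (Finset.univ.filter (fun ij : Fin (2^p) × Fin (2^p) => ij.1 ≤ ij.2 ∧ F ij.1 ≠ F ij.2)).card
      = (A ×ˢ B).card := by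
    refine Finset.card_bij' (fun ij _ => if F ij.1 = 0 then ij else ij.swap)
      (fun ab _ => if ab.1 ≤ ab.2 then ab else ab.swap) ?_ ?_ ?_ ?_
    · intro ij hij
      rw [Finset.mem_filter] at hij
      obtain ⟨-, hle, hne⟩ := hij
      rw [Finset.mem_product]
      split
      · next h0 =>
        refine ⟨Finset.mem_filter.2 ⟨Finset.mem_univ _, h0⟩,
          Finset.mem_filter.2 ⟨Finset.mem_univ _, ?_⟩⟩
        exact h01 _ (fun h => hne (h0.trans h.symm))
      · next h0 =>
        have h1 : F ij.1 = 1 := h01 _ h0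
        have h2 : F ij.2 = 0 := h10 _ (fun h => hne (h1.trans h.symm))
        exact ⟨Finset.mem_filter.2 ⟨Finset.mem_univ _, h2⟩,
          Finset.mem_filter.2 ⟨Finset.mem_univ _, h1⟩⟩
    · intro ab hab
      rw [Finset.mem_product, Finset.mem_filter, Finset.mem_filter] at hab
      obtain ⟨⟨-, h0⟩, -, h1⟩ := hab
      have hne : F ab.1 ≠ F ab.2 := by rw [h0, h1]; decide
      rw [Finset.mem_filter]
      split
      · next hle => exact ⟨Finset.mem_univ _, hle, hne⟩
      · next hle =>
        exact ⟨Finset.mem_univ _, le_of_lt (lt_of_not_ge hle), Ne.symm hne⟩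
    · intro ij hij
      rw [Finset.mem_filter] at hij
      obtain ⟨-, hle, hne⟩ := hij
      have hlt : ij.1 ≠ ij.2 := fun h => hne (by rw [h])
      split
      · next h0 => simp [hle]
      · next h0 =>
        have : ¬ (ij.swap.1 ≤ ij.swap.2) := by
          simp only [Prod.fst_swap, Prod.snd_swap]
          exact not_le_of_gt (lt_of_le_of_ne hle hlt)
        rw [if_neg this, Prod.swap_swap]
    · intro ab hab
      rw [Finset.mem_product, Finset.mem_filter, Finset.mem_filter] at hab
      obtain ⟨⟨-, h0⟩, -, h1⟩ := hab
      split
      · next hle => simp [h0]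
      · next hle =>
        have : ¬ (F ab.swap.1 = 0) := by
          simp only [Prod.fst_swap, h1]; decide
        rw [if_neg this, Prod.swap_swap]
  rw [hcard, Finset.card_product, ← hcardAB]
  -- arithmetic
  obtain ⟨q, rfl⟩ : ∃ q, p = q + 1 := ⟨p - 1, (Nat.succ_pred_eq_of_pos hp).symm⟩
  rw [← hcardAB] at hsum
  have hAcard : A.card = 2^q := by
    have h2 : A.card * 2 = 2^q * 2 := by
      rw [← pow_succ]
      omega
    exact Nat.eq_of_mul_eq_mul_right (by norm_num) h2
  rw [hAcard, pow_succ]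
  have h4 : 2^q * 2 * (2^q * 2) = 2^q * 2^q * 4 := by ring
  rw [h4, Nat.mul_div_cancel _ (by norm_num : 0 < 4)]
end

section
/- Let p ≥ 1, m = 2^p, and let k, l ∈ {0, …, m−1} with k ≠ l. For i, j ∈ {0, …, m−1} let S(i,j) be the 2×2 matrix with rows (H(m)_{i,k}, H(m)_{i,l}) and (H(m)_{j,k}, H(m)_{j,l}). Then the number of pairs (i,j) with 0 ≤ i ≤ j ≤ m−1 and det S(i,j) = 0 equals m(m+2)/4, independently of the choice of the input pair (k,l). -/
namespace Stmt5Aux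
open Finset

/-- The sign character `(-1)^(popcount x)` restricted to bits below `p`. -/
def chi (p x : ℕ) : ℤ := ∏ t ∈ Finset.range p, (if Nat.testBit x t then (-1 : ℤ) else 1)

lemma sylv_eq_chi (p : ℕ) (i j : Fin (2^p)) : sylv p i j = chi p (i.val &&& j.val) := by
  simp only [sylv, chi, Finset.card_filter, ← Finset.prod_pow_eq_pow_sum]
  refine Finset.prod_congr rfl fun t _ => ?_
  by_cases h : Nat.testBit (i.val &&& j.val) t <;> simp [h]

lemma chi_mul_self (p x : ℕ) : chi p x * chi p x = 1 := by
  rw [chi, ← Finset.prod_mul_distrib]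
  refine Finset.prod_eq_one fun t _ => ?_
  by_cases h : Nat.testBit x t <;> simp [h]

lemma chi_values (p x : ℕ) : chi p x = 1 ∨ chi p x = -1 :=
  mul_self_eq_one_iff.mp (chi_mul_self p x)

lemma chi_and_mul (p : ℕ) (i k l : ℕ) :
    chi p (i &&& k) * chi p (i &&& l) = chi p (i &&& (k ^^^ l)) := by
  rw [chi, chi, chi, ← Finset.prod_mul_distrib]
  refine Finset.prod_congr rfl fun t _ => ?_
  simp only [Nat.testBit_and, Nat.testBit_xor]
  cases hi : Nat.testBit i t <;> cases hk : Nat.testBit k t <;> cases hl : Nat.testBit l t <;> simp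

lemma chi_xor_pow (p x t : ℕ) (ht : t < p) :
    chi p (x ^^^ 2^t) = - chi p x := by
  have hmem : t ∈ Finset.range p := Finset.mem_range.mpr ht
  rw [chi, chi, Finset.prod_eq_mul_prod_sdiff_singleton_of_mem hmem,
    Finset.prod_eq_mul_prod_sdiff_singleton_of_mem hmem]
  have h1 : ∀ s ∈ Finset.range p \ {t},
      (if Nat.testBit (x ^^^ 2^t) s then (-1 : ℤ) else 1) =
      (if Nat.testBit x s then (-1 : ℤ) else 1) := by
    intro s hs
    have hst : t ≠ s := fun h => by simp [h] at hs
    simp [Nat.testBit_xor, Nat.testBit_two_pow, hst]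
  rw [Finset.prod_congr rfl h1]
  have h2 : (if Nat.testBit (x ^^^ 2^t) t then (-1 : ℤ) else 1) =
      -(if Nat.testBit x t then (-1 : ℤ) else 1) := by
    simp only [Nat.testBit_xor, Nat.testBit_two_pow]
    cases h : Nat.testBit x t <;> simp
  rw [h2, neg_mul]

lemma and_xor_pow (i d t : ℕ) (hd : Nat.testBit d t = true) :
    (i ^^^ 2^t) &&& d = (i &&& d) ^^^ 2^t := by
  apply Nat.eq_of_testBit_eq
  intro s
  simp only [Nat.testBit_and, Nat.testBit_xor, Nat.testBit_two_pow]
  by_cases h : t = s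
  · subst h; simp [hd]
  · simp [h]

/-- the two sign classes have equal size -/
lemma half_count (p d : ℕ) (hd0 : d ≠ 0) (hdlt : d < 2^p) :
    (Finset.univ.filter (fun i : Fin (2^p) => chi p (i.val &&& d) = 1)).card
    = (Finset.univ.filter (fun i : Fin (2^p) => ¬ chi p (i.val &&& d) = 1)).card := by
  have hex : ∃ t, Nat.testBit d t = true := by
    by_contra h
    push_neg at h
    exact hd0 (Nat.eq_of_testBit_eq (fun i => by simp [h i]))
  obtain ⟨t, ht⟩ := hex
  have htp : t < p := by
    by_contra h
    push_neg at h
    have : d < 2^t := lt_of_lt_of_le hdlt (Nat.pow_le_pow_right (by norm_num) h)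
    rw [Nat.testBit_lt_two_pow this] at ht
    exact Bool.false_ne_true ht
  have hlt : ∀ i : Fin (2^p), i.val ^^^ 2^t < 2^p :=
    fun i => Nat.xor_lt_two_pow i.isLt (Nat.pow_lt_pow_right (by norm_num) htp)
  have hflip : ∀ i : Fin (2^p), chi p ((i.val ^^^ 2^t) &&& d) = - chi p (i.val &&& d) := by
    intro i
    rw [and_xor_pow _ _ _ ht, chi_xor_pow _ _ _ htp]
  refine Finset.card_bij' (fun i _ => ⟨i.val ^^^ 2^t, hlt i⟩)
    (fun i _ => ⟨i.val ^^^ 2^t, hlt i⟩) ?_ ?_ ?_ ?_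
  · intro a ha
    simp only [Finset.mem_filter, Finset.mem_univ, true_and] at ha ⊢
    rw [hflip a, ha]
    norm_num
  · intro a ha
    simp only [Finset.mem_filter, Finset.mem_univ, true_and] at ha ⊢
    rcases chi_values p (a.val &&& d) with h | h
    · exact absurd h ha
    · rw [hflip a, h]; norm_num
  · intro a _
    apply Fin.ext
    simp [Nat.xor_assoc]
  · intro a _
    apply Fin.ext
    simp [Nat.xor_assoc]

lemma det_zero_iff (a b c d : ℤ) (ha : a = 1 ∨ a = -1) (hb : b = 1 ∨ b = -1)
    (hc : c = 1 ∨ c = -1) (hd : d = 1 ∨ d = -1) :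
    a * d - b * c = 0 ↔ a * b = c * d := by
  rcases ha with ha | ha <;> rcases hb with hb | hb <;> rcases hc with hc | hc <;>
    rcases hd with hd | hd <;> subst ha <;> subst hb <;> subst hc <;> subst hd <;> norm_num

/-- counting pairs i ≤ j in the same class -/
lemma pair_count {m n : ℕ} (P : Fin m → Prop) [DecidablePred P]
    (hA : (Finset.univ.filter P).card = n)
    (hB : (Finset.univ.filter (fun i => ¬ P i)).card = n) :
    (Finset.univ.filter (fun ij : Fin m × Fin m =>
        ij.1 ≤ ij.2 ∧ (P ij.1 ↔ P ij.2))).card = n * n + n := by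
  classical
  have hcard : (Finset.univ.filter (fun ij : Fin m × Fin m =>
        ij.1 ≤ ij.2 ∧ (P ij.1 ↔ P ij.2))).card
      = (Finset.univ.filter (fun ij : Fin m × Fin m =>
        ij.2 ≤ ij.1 ∧ (P ij.1 ↔ P ij.2))).card := by
    refine Finset.card_bij' (fun ij _ => ij.swap) (fun ij _ => ij.swap) ?_ ?_ ?_ ?_ <;>
      intro a ha <;>
      simp only [Finset.mem_filter, Finset.mem_univ, true_and, Prod.fst_swap,
        Prod.snd_swap, Prod.swap_swap] at ha ⊢ <;> tauto
  have hunion : (Finset.univ.filter (fun ij : Fin m × Fin m =>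
        ij.1 ≤ ij.2 ∧ (P ij.1 ↔ P ij.2)))
      ∪ (Finset.univ.filter (fun ij : Fin m × Fin m =>
        ij.2 ≤ ij.1 ∧ (P ij.1 ↔ P ij.2)))
      = Finset.univ.filter (fun ij : Fin m × Fin m => P ij.1 ↔ P ij.2) := by
    ext ij
    simp only [Finset.mem_union, Finset.mem_filter, Finset.mem_univ, true_and]
    rcases le_total ij.1 ij.2 with h | h <;> tauto
  have hinter : (Finset.univ.filter (fun ij : Fin m × Fin m =>
        ij.1 ≤ ij.2 ∧ (P ij.1 ↔ P ij.2)))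
      ∩ (Finset.univ.filter (fun ij : Fin m × Fin m =>
        ij.2 ≤ ij.1 ∧ (P ij.1 ↔ P ij.2)))
      = Finset.univ.filter (fun ij : Fin m × Fin m => ij.1 = ij.2) := by
    ext ij
    simp only [Finset.mem_inter, Finset.mem_filter, Finset.mem_univ, true_and]
    constructor
    · rintro ⟨⟨h1, _⟩, ⟨h2, _⟩⟩
      exact le_antisymm h1 h2
    · intro h
      rw [h]
      exact ⟨⟨le_refl _, Iff.rfl⟩, ⟨le_refl _, Iff.rfl⟩⟩
  have hQcard : (Finset.univ.filter (fun ij : Fin m × Fin m => P ij.1 ↔ P ij.2)).card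
      = n * n + n * n := by
    have heq : Finset.univ.filter (fun ij : Fin m × Fin m => P ij.1 ↔ P ij.2)
        = (Finset.univ.filter P) ×ˢ (Finset.univ.filter P)
          ∪ (Finset.univ.filter (fun i => ¬ P i)) ×ˢ (Finset.univ.filter (fun i => ¬ P i)) := by
      ext ij
      simp only [Finset.mem_filter, Finset.mem_univ, true_and, Finset.mem_union,
        Finset.mem_product]
      tauto
    rw [heq, Finset.card_union_of_disjoint, Finset.card_product, Finset.card_product, hA, hB]
    refine Finset.disjoint_left.mpr ?_
    intro ij h1 h2
    rw [Finset.mem_product] at h1 h2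
    simp only [Finset.mem_filter, Finset.mem_univ, true_and] at h1 h2
    exact h2.1 h1.1
  have hDcard : (Finset.univ.filter (fun ij : Fin m × Fin m => ij.1 = ij.2)).card = n + n := by
    have hbij : (Finset.univ.filter (fun ij : Fin m × Fin m => ij.1 = ij.2)).card
        = (Finset.univ : Finset (Fin m)).card := by
      refine Finset.card_bij' (fun ij _ => ij.1) (fun i _ => (i, i)) ?_ ?_ ?_ ?_
      · intros; simp
      · intros; simp
      · intro a ha
        simp only [Finset.mem_filter, Finset.mem_univ, true_and] at ha
        exact Prod.ext rfl ha
      · intros; rfl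
    rw [hbij, ← Finset.card_filter_add_card_filter_not (s := Finset.univ) P, hA, hB]
  have hkey := Finset.card_union_add_card_inter
    (Finset.univ.filter (fun ij : Fin m × Fin m => ij.1 ≤ ij.2 ∧ (P ij.1 ↔ P ij.2)))
    (Finset.univ.filter (fun ij : Fin m × Fin m => ij.2 ≤ ij.1 ∧ (P ij.1 ↔ P ij.2)))
  rw [hunion, hinter, hQcard, hDcard, ← hcard] at hkey
  omega

end Stmt5Aux

/-- for two fermions entering an arbitrary pair of distinct modes `k ≠ l`
of the `m = 2^p` mode Sylvester interferometer, the number of unordered output pairs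
`(i,j)` whose scattering matrix has vanishing determinant (suppressed outputs) is
`m(m+2)/4`, independently of the choice of `(k,l)`. -/
theorem stmt5 (p : ℕ) (hp : 1 ≤ p) (k l : Fin (2^p)) (hkl : k ≠ l) :
    (Finset.univ.filter (fun ij : Fin (2^p) × Fin (2^p) =>
        ij.1 ≤ ij.2 ∧
        Matrix.det !![sylv p ij.1 k, sylv p ij.1 l;
                      sylv p ij.2 k, sylv p ij.2 l] = 0)).card
      = 2^p * (2^p + 2) / 4 := by
  classical
  open Stmt5Aux in
  set d : ℕ := k.val ^^^ l.val with hd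
  have hd0 : d ≠ 0 := by
    intro h
    exact hkl (Fin.ext (by have h' := congrArg (· ^^^ l.val) h; simp only [hd, Nat.xor_assoc, Nat.xor_self, Nat.xor_zero, Nat.zero_xor] at h'; exact h'))
  have hdlt : d < 2^p := Nat.xor_lt_two_pow k.isLt l.isLt
  set P : Fin (2^p) → Prop := fun i => chi p (i.val &&& d) = 1 with hP
  -- rewrite the filter condition
  have hcond : ∀ ij : Fin (2^p) × Fin (2^p),
      (ij.1 ≤ ij.2 ∧
        Matrix.det !![sylv p ij.1 k, sylv p ij.1 l;
                      sylv p ij.2 k, sylv p ij.2 l] = 0)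
      ↔ (ij.1 ≤ ij.2 ∧ (P ij.1 ↔ P ij.2)) := by
    rintro ⟨i, j⟩
    simp only [Matrix.det_fin_two_of]
    rw [sylv_eq_chi, sylv_eq_chi, sylv_eq_chi, sylv_eq_chi]
    rw [det_zero_iff _ _ _ _ (chi_values _ _) (chi_values _ _) (chi_values _ _)
      (chi_values _ _)]
    rw [chi_and_mul, chi_and_mul, ← hd]
    have : (chi p (i.val &&& d) = chi p (j.val &&& d)) ↔ (P i ↔ P j) := by
      simp only [hP]
      rcases chi_values p (i.val &&& d) with h1 | h1 <;>
        rcases chi_values p (j.val &&& d) with h2 | h2 <;> rw [h1, h2] <;> norm_num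
    rw [this]
  rw [Finset.filter_congr (fun ij _ => hcond ij)]
  set n := (Finset.univ.filter P).card with hn
  have hB : (Finset.univ.filter (fun i => ¬ P i)).card = n := (half_count p d hd0 hdlt).symm
  rw [pair_count P hn.symm hB]
  -- arithmetic: 2^p = n + n, so n*n + n = 2^p*(2^p+2)/4
  have h2n : n + n = 2^p := by
    have := Finset.card_filter_add_card_filter_not (s := (Finset.univ : Finset (Fin (2^p)))) P
    rw [← hn, hB, Finset.card_univ, Fintype.card_fin] at this
    exact this
  have h4 : 2^p * (2^p + 2) = 4 * (n * n + n) := by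
    rw [← h2n]; ring
  rw [h4, Nat.mul_div_cancel_left _ (by norm_num)]
end

section
/- Let p = k + q with k, q ≥ 0, set m = 2^p and n = 2^q, fix c ∈ {0, …, 2^k−1}, and let g : {0, …, n−1} → {0, …, m−1} be any function. Let S be the n×n matrix with entries S_{i,j} = H(m)_{g(i), c·n + j}, and let S′ be the n×n matrix with entries S′_{i,j} = H(n)_{g(i) mod n, j}. Then perm S = (∏_{i=0}^{n−1} H(2^k)_{⌊g(i)/n⌋, c}) · perm S′ and det S = (∏_{i=0}^{n−1} H(2^k)_{⌊g(i)/n⌋, c}) · det S′. In particular perm S = 0 if and only if perm S′ = 0, and det S = 0 if and only if det S′ = 0. -/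
lemma tb_low {v q t : ℕ} (u : ℕ) (hv : v < 2^q) (ht : t < q) :
    Nat.testBit (u * 2^q + v) t = Nat.testBit v t := by
  have h : (u * 2^q + v) % 2^q = v := by
    rw [Nat.add_comm, Nat.add_mul_mod_self_right, Nat.mod_eq_of_lt hv]
  calc Nat.testBit (u * 2^q + v) t = Nat.testBit ((u * 2^q + v) % 2^q) t := by
        rw [Nat.testBit_mod_two_pow]; simp [ht]
    _ = Nat.testBit v t := by rw [h]

lemma tb_high {v q : ℕ} (u s : ℕ) (hv : v < 2^q) :
    Nat.testBit (u * 2^q + v) (q + s) = Nat.testBit u s := by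
  have h : (u * 2^q + v) >>> q = u := by
    rw [Nat.shiftRight_eq_div_pow, Nat.add_comm, Nat.add_mul_div_right _ _ (Nat.two_pow_pos q),
      Nat.div_eq_of_lt hv, Nat.zero_add]
  conv_rhs => rw [← h]
  rw [Nat.testBit_shiftRight]

lemma and_split {v b q : ℕ} (u a : ℕ) (hv : v < 2^q) (hb : b < 2^q) :
    (u * 2^q + v) &&& (a * 2^q + b) = (u &&& a) * 2^q + (v &&& b) := by
  have hvb : v &&& b < 2^q := lt_of_le_of_lt (Nat.and_le_left) hv
  apply Nat.eq_of_testBit_eq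
  intro t
  rcases Nat.lt_or_ge t q with ht | ht
  · rw [tb_low _ hvb ht, Nat.testBit_and, tb_low u hv ht, tb_low a hb ht, Nat.testBit_and]
  · obtain ⟨s, rfl⟩ : ∃ s, t = q + s := ⟨t - q, by omega⟩
    rw [tb_high _ _ hvb, Nat.testBit_and, tb_high u _ hv, tb_high a _ hb, Nat.testBit_and]

lemma count_split (k q w z : ℕ) (hz : z < 2^q) :
    ((Finset.range (k+q)).filter (fun t => Nat.testBit (w * 2^q + z) t)).card
      = ((Finset.range k).filter (fun t => Nat.testBit w t)).card
        + ((Finset.range q).filter (fun t => Nat.testBit z t)).card := by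
  rw [Nat.add_comm k q, Finset.range_add, Finset.filter_union,
    Finset.card_union_of_disjoint
      (Finset.disjoint_filter_filter (Finset.disjoint_range_addLeftEmbedding q _)),
    Nat.add_comm]
  congr 1
  · rw [Finset.filter_map, Finset.card_map]
    congr 1
    apply Finset.filter_congr
    intro t ht
    simp only [Function.comp, addLeftEmbedding_apply]
    rw [tb_high w t hz]
  · apply congrArg
    apply Finset.filter_congr
    intro t ht
    rw [Finset.mem_range] at ht
    rw [tb_low w hz ht]
/-- reduction of the `n`-particle scattering matrix on `m = 2^(k+q)` modes
(input on modes `c·n,…,c·n+n−1`, output configuration `g`) to the `n = 2^q` mode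
Sylvester interferometer with output modes `g(i) mod n`:
`perm S = (∏ i, H(2^k)_{⌊g(i)/n⌋,c}) · perm S′` and likewise for the determinant;
in particular `perm S = 0 ↔ perm S′ = 0` and `det S = 0 ↔ det S′ = 0`. -/
theorem stmt7 (k q : ℕ) (c : Fin (2^k)) (g : Fin (2^q) → Fin (2^(k+q)))
    (col : Fin (2^q) → Fin (2^(k+q))) (hcol : ∀ j, (col j).val = c.val * 2^q + j.val)
    (gdiv : Fin (2^q) → Fin (2^k)) (hgdiv : ∀ i, (gdiv i).val = (g i).val / 2^q)
    (gmod : Fin (2^q) → Fin (2^q)) (hgmod : ∀ i, (gmod i).val = (g i).val % 2^q)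
    (S S' : Matrix (Fin (2^q)) (Fin (2^q)) ℤ)
    (hS : ∀ i j, S i j = sylv (k+q) (g i) (col j))
    (hS' : ∀ i j, S' i j = sylv q (gmod i) j) :
    perm S = (∏ i, sylv k (gdiv i) c) * perm S' ∧
    S.det = (∏ i, sylv k (gdiv i) c) * S'.det ∧
    (perm S = 0 ↔ perm S' = 0) ∧
    (S.det = 0 ↔ S'.det = 0) := by
  set a : Fin (2^q) → ℤ := fun i => sylv k (gdiv i) c with ha
  have hfac : ∀ i j, S i j = a i * S' i j := by
    intro i j
    rw [hS, hS', ha]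
    simp only [sylv]
    rw [← pow_add]
    congr 1
    have hx : (g i).val = (gdiv i).val * 2^q + (gmod i).val := by
      rw [hgdiv, hgmod]; exact (Nat.div_add_mod' _ _).symm
    rw [hx, hcol, and_split _ _ (gmod i).isLt j.isLt,
      count_split k q _ _ (lt_of_le_of_lt Nat.and_le_left (gmod i).isLt)]
  have haprod : (∏ i, a i) ≠ 0 := by
    apply Finset.prod_ne_zero_iff.2
    intro i _
    rw [ha]
    simp only [sylv]
    exact pow_ne_zero _ (by norm_num)
  have hperm : perm S = (∏ i, a i) * perm S' := by
    unfold perm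
    rw [Finset.mul_sum]
    apply Finset.sum_congr rfl
    intro σ _
    rw [← Finset.prod_mul_distrib]
    exact Finset.prod_congr rfl fun i _ => hfac i (σ i)
  have hdet : S.det = (∏ i, a i) * S'.det := by
    have hSd : S = Matrix.diagonal a * S' := by
      ext i j
      rw [Matrix.diagonal_mul, hfac]
    rw [hSd, Matrix.det_mul, Matrix.det_diagonal]
  refine ⟨hperm, hdet, ?_, ?_⟩
  · rw [hperm]; simp [haprod]
  · rw [hdet]; simp [haprod]
end

section
/- Let p ≥ 0, n = 2^p, and let r : {0, …, n−1} → {0, …, n−1} be any function (rows may repeat). Let A be the n×n matrix whose i-th row is the r(i)-th row of H(n), i.e. A_{i,j} = H(n)_{r(i), j}. If the bitwise XOR r(0) ⊕ r(1) ⊕ ⋯ ⊕ r(n−1) is nonzero, then perm A = 0. -/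
/-- sign helper -/
def gsign (b : Bool) : ℤ := if b then -1 else 1

lemma gsign_xor (a b : Bool) : gsign (a ^^ b) = gsign a * gsign b := by
  cases a <;> cases b <;> simp [gsign]

lemma card_pow (S : Finset ℕ) (q : ℕ → Bool) :
    ((-1:ℤ)) ^ ((S.filter (fun s => q s)).card) = ∏ s ∈ S, gsign (q s) := by
  unfold gsign
  rw [Finset.prod_ite, Finset.prod_const, Finset.prod_const, one_pow, mul_one]

lemma flipLem (p t : ℕ) (ht : t < p) (a j : ℕ) :
    (-1:ℤ) ^ (((Finset.range p).filter (fun s => Nat.testBit (a &&& (j ^^^ 2^t)) s)).card)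
    = gsign (Nat.testBit a t) *
      (-1:ℤ) ^ (((Finset.range p).filter (fun s => Nat.testBit (a &&& j) s)).card) := by
  rw [card_pow, card_pow]
  have htm : t ∈ Finset.range p := Finset.mem_range.2 ht
  rw [← Finset.mul_prod_erase _ _ htm, ← Finset.mul_prod_erase _ (fun s => gsign ((a &&& j).testBit s)) htm]
  have herase : ∏ s ∈ (Finset.range p).erase t, gsign ((a &&& (j ^^^ 2^t)).testBit s)
      = ∏ s ∈ (Finset.range p).erase t, gsign ((a &&& j).testBit s) := by
    refine Finset.prod_congr rfl (fun s hs => ?_)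
    have hne : t ≠ s := fun h => (Finset.mem_erase.1 hs).1 h.symm
    rw [Nat.testBit_and, Nat.testBit_and, Nat.testBit_xor,
      Nat.testBit_two_pow_of_ne hne, Bool.xor_false]
  rw [herase, ← mul_assoc]
  congr 1
  rw [Nat.testBit_and, Nat.testBit_and, Nat.testBit_xor, Nat.testBit_two_pow_self]
  cases h1 : Nat.testBit a t <;> cases h2 : Nat.testBit j t <;> simp [gsign]

lemma foldr_lt (p : ℕ) (l : List ℕ) (hl : ∀ x ∈ l, x < 2^p) :
    l.foldr (· ^^^ ·) 0 < 2^p := by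
  induction l with
  | nil => exact Nat.two_pow_pos p
  | cons x l ih =>
    exact Nat.xor_lt_two_pow (hl x (by simp)) (ih (fun y hy => hl y (by simp [hy])))

lemma foldr_sign (t : ℕ) (l : List ℕ) :
    (l.map (fun x => gsign (Nat.testBit x t))).prod
      = gsign (Nat.testBit (l.foldr (· ^^^ ·) 0) t) := by
  induction l with
  | nil => simp [gsign]
  | cons x l ih =>
    simp only [List.map_cons, List.prod_cons, List.foldr_cons, ih,
      Nat.testBit_xor, gsign_xor]

/-- if `A` is the `n × n` matrix (`n = 2^p`) whose `i`-th row is the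
`r(i)`-th row of the Sylvester matrix `H(n)` (rows may repeat) and the bitwise XOR
`r(0) ⊕ r(1) ⊕ ⋯ ⊕ r(n−1)` is nonzero, then `perm A = 0`. -/
theorem stmt8 (p : ℕ) (r : Fin (2^p) → Fin (2^p))
    (A : Matrix (Fin (2^p)) (Fin (2^p)) ℤ)
    (hA : ∀ i j, A i j = sylv p (r i) j)
    (hxor : (List.ofFn (fun i => (r i).val)).foldr (· ^^^ ·) 0 ≠ 0) :
    perm A = 0 := by
  set l : List ℕ := List.ofFn (fun i => (r i).val) with hl
  set b : ℕ := l.foldr (· ^^^ ·) 0 with hb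
  obtain ⟨t, htb⟩ := Nat.exists_testBit_of_ne_zero hxor
  have hblt : b < 2^p := foldr_lt p l (by
    intro x hx
    rw [hl] at hx
    obtain ⟨i, rfl⟩ := List.mem_ofFn.1 hx
    exact (r i).isLt)
  have ht : t < p := by
    by_contra h
    push_neg at h
    have : b < 2^t := lt_of_lt_of_le hblt (Nat.pow_le_pow_right (by norm_num) h)
    rw [Nat.testBit_lt_two_pow this] at htb
    exact Bool.false_ne_true htb
  -- the XOR-by-2^t permutation
  have hmem : ∀ j : Fin (2^p), (j.val ^^^ 2^t) < 2^p :=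
    fun j => Nat.xor_lt_two_pow j.isLt (Nat.pow_lt_pow_right (by norm_num) ht)
  let τ : Equiv.Perm (Fin (2^p)) :=
    { toFun := fun j => ⟨j.val ^^^ 2^t, hmem j⟩
      invFun := fun j => ⟨j.val ^^^ 2^t, hmem j⟩
      left_inv := fun j => Fin.ext (xor_cancel_right _ _)
      right_inv := fun j => Fin.ext (xor_cancel_right _ _) }
  have key : ∀ σ : Equiv.Perm (Fin (2^p)),
      (∏ i, A i ((τ * σ) i)) = - ∏ i, A i (σ i) := by
    intro σ
    have step : ∀ i, A i ((τ * σ) i) = gsign (Nat.testBit (r i).val t) * A i (σ i) := by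
      intro i
      rw [hA, hA]
      show sylv p (r i) ⟨(σ i).val ^^^ 2^t, _⟩ = _
      unfold sylv
      exact flipLem p t ht (r i).val (σ i).val
    calc (∏ i, A i ((τ * σ) i))
        = ∏ i, (gsign (Nat.testBit (r i).val t) * A i (σ i)) := by
          exact Finset.prod_congr rfl (fun i _ => step i)
      _ = (∏ i, gsign (Nat.testBit (r i).val t)) * ∏ i, A i (σ i) :=
          Finset.prod_mul_distrib
      _ = - ∏ i, A i (σ i) := by
          have : (∏ i, gsign (Nat.testBit (r i).val t)) = gsign (Nat.testBit b t) := by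
            rw [← List.prod_ofFn]
            simpa [hb, hl, List.map_ofFn, Function.comp_def] using foldr_sign t l
          rw [this, htb]
          simp [gsign]
  have hsum : perm A = - perm A := by
    unfold perm
    conv_lhs => rw [← Equiv.sum_comp (Equiv.mulLeft τ) (fun σ => ∏ i, A i (σ i))]
    simp only [Equiv.coe_mulLeft]
    rw [← Finset.sum_neg_distrib]
    exact Finset.sum_congr rfl (fun σ _ => key σ)
  linarith
end

section
/- Let p = k + q with k, q ≥ 0, set m = 2^p and n = 2^q, fix c ∈ {0, …, 2^k−1}, and let g : {0, …, n−1} → {0, …, m−1} be any function (an output configuration of n fermions on m modes). Let S be the n×n scattering matrix with entries S_{i,j} = H(m)_{g(i), c·n + j}. Then det S ≠ 0 if and only if the map i ↦ g(i) mod n is injective, i.e. the residues g(0) mod n, …, g(n−1) mod n are pairwise distinct (equivalently, they form a permutation of {0, …, n−1}). -/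
def sgn (q x : ℕ) : ℤ := (-1) ^ (((Finset.range q).filter (fun t => x.testBit t)).card)

lemma sgn_eq_prod (q x : ℕ) :
    sgn q x = ∏ t ∈ Finset.range q, (if x.testBit t then (-1 : ℤ) else 1) := by
  rw [Finset.prod_ite, Finset.prod_const, Finset.prod_const, one_pow, mul_one, sgn]

lemma sgn_mul (q a b : ℕ) : sgn q a * sgn q b = sgn q (a ^^^ b) := by
  simp only [sgn_eq_prod, ← Finset.prod_mul_distrib]
  refine Finset.prod_congr rfl fun t _ => ?_
  rw [Nat.testBit_xor]
  cases a.testBit t <;> cases b.testBit t <;> norm_num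

lemma sgn_zero (q : ℕ) : sgn q 0 = 1 := by
  simp [sgn]

lemma sgn_two_pow {q t : ℕ} (ht : t < q) : sgn q (2 ^ t) = -1 := by
  have : (Finset.range q).filter (fun u => (2 ^ t).testBit u) = {t} := by
    ext u
    simp only [Finset.mem_filter, Finset.mem_range, Nat.testBit_two_pow,
      Finset.mem_singleton, decide_eq_true_eq]
    constructor
    · rintro ⟨_, h⟩; exact h.symm
    · rintro rfl; exact ⟨ht, rfl⟩
  rw [sgn, this]; simp

lemma sum_sgn_eq_zero {q d : ℕ} (hd : d < 2 ^ q) (hd0 : d ≠ 0) :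
    ∑ j : Fin (2 ^ q), sgn q (d &&& j.val) = 0 := by
  obtain ⟨t, ht⟩ := Nat.exists_testBit_of_ne_zero hd0
  have htq : t < q := by
    by_contra h
    have : d < 2 ^ t := lt_of_lt_of_le hd (Nat.pow_le_pow_right (by norm_num) (le_of_not_gt h))
    simp [Nat.testBit_lt_two_pow this] at ht
  have h2t : 2 ^ t < 2 ^ q := Nat.pow_lt_pow_right (by norm_num) htq
  let e : Fin (2 ^ q) ≃ Fin (2 ^ q) :=
    { toFun := fun j => ⟨j.val ^^^ 2 ^ t, Nat.xor_lt_two_pow j.isLt h2t⟩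
      invFun := fun j => ⟨j.val ^^^ 2 ^ t, Nat.xor_lt_two_pow j.isLt h2t⟩
      left_inv := fun j => by simp [xor_cancel_right]
      right_inv := fun j => by simp [xor_cancel_right] }
  have key : ∀ j : Fin (2 ^ q), sgn q (d &&& (e j).val) = - sgn q (d &&& j.val) := by
    intro j
    have h1 : d &&& (j.val ^^^ 2 ^ t) = (d &&& j.val) ^^^ 2 ^ t := by
      rw [Nat.and_xor_distrib_left, Nat.and_two_pow, ht]
      simp
    show sgn q (d &&& (j.val ^^^ 2 ^ t)) = _
    rw [h1, ← sgn_mul, sgn_two_pow htq]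
    ring
  have h2 : ∑ j : Fin (2 ^ q), sgn q (d &&& j.val)
      = ∑ j : Fin (2 ^ q), sgn q (d &&& (e j).val) :=
    (Equiv.sum_comp e (fun j => sgn q (d &&& j.val))).symm
  simp only [key, Finset.sum_neg_distrib] at h2
  linarith

lemma sylv_eq_sgn (q : ℕ) (i j : Fin (2 ^ q)) : sylv q i j = sgn q (i.val &&& j.val) := rfl

lemma sylv_mul_self (q : ℕ) : sylv q * sylv q = (2 ^ q : ℤ) • 1 := by
  ext a b
  rw [Matrix.mul_apply]
  simp only [sylv_eq_sgn]
  have : ∀ j : Fin (2 ^ q), sgn q (a.val &&& j.val) * sgn q (j.val &&& b.val)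
      = sgn q ((a.val ^^^ b.val) &&& j.val) := by
    intro j
    rw [Nat.and_comm j.val b.val, sgn_mul, ← Nat.and_xor_distrib_right]
  rw [Finset.sum_congr rfl (fun j _ => this j)]
  by_cases hab : a = b
  · subst hab
    simp [Nat.xor_self, sgn_zero, Matrix.one_apply, Finset.card_univ]
  · have hne : a.val ^^^ b.val ≠ 0 := by
      intro h
      exact hab (Fin.ext (xor_eq_zero_iff.mp h))
    rw [sum_sgn_eq_zero (Nat.xor_lt_two_pow a.isLt b.isLt) hne]
    simp [Matrix.one_apply, hab]

lemma sylv_det_ne_zero (q : ℕ) : (sylv q).det ≠ 0 := by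
  intro h
  have := congrArg Matrix.det (sylv_mul_self q)
  rw [Matrix.det_mul, h, mul_zero] at this
  rw [Matrix.det_smul, Matrix.det_one, mul_one] at this
  exact absurd this.symm (by positivity)

lemma card_split (k q a c j : ℕ) (hj : j < 2 ^ q) :
    ((Finset.range (k + q)).filter (fun t => (a &&& (c * 2 ^ q + j)).testBit t)).card
      = ((Finset.range q).filter (fun t => ((a % 2 ^ q) &&& j).testBit t)).card
        + ((Finset.range k).filter (fun t => ((a >>> q) &&& c).testBit t)).card := by
  have hB : ∀ t, (c * 2 ^ q + j).testBit t
      = if t < q then j.testBit t else c.testBit (t - q) := by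
    intro t
    rw [mul_comm]
    exact Nat.testBit_two_pow_mul_add c hj t
  have hkq : k + q = q + k := Nat.add_comm k q
  rw [hkq, Finset.range_add, Finset.filter_union, Finset.card_union_of_disjoint, Finset.filter_map,
    Finset.card_map]
  · congr 1
    · refine congrArg Finset.card (Finset.filter_congr ?_)
      intro t htq
      rw [Finset.mem_range] at htq
      simp [Nat.testBit_and, hB t, htq, Nat.testBit_mod_two_pow]
    · refine congrArg Finset.card (Finset.filter_congr ?_)
      intro u _
      simp only [Function.comp, addLeftEmbedding_apply]
      have h1 : ¬ (q + u < q) := by omega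
      simp [Nat.testBit_and, hB (q + u), h1, Nat.testBit_shiftRight]
  · apply Finset.disjoint_filter_filter
    rw [Finset.disjoint_left]
    intro x hx hx2
    rw [Finset.mem_range] at hx
    rw [Finset.mem_map] at hx2
    obtain ⟨u, _, hu⟩ := hx2
    rw [addLeftEmbedding_apply] at hu
    omega


/-- fermionic suppression law: for `n = 2^q` fermions entering one per
mode on modes `c·n,…,c·n+n−1` of the `m = 2^(k+q)` mode Sylvester interferometer and
exiting on modes `g(0),…,g(n−1)`, the output is allowed (`det S ≠ 0`) if and only if
the residues `g(i) mod n` are pairwise distinct. -/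
theorem stmt12 (k q : ℕ) (c : Fin (2^k)) (g : Fin (2^q) → Fin (2^(k+q)))
    (col : Fin (2^q) → Fin (2^(k+q))) (hcol : ∀ j, (col j).val = c.val * 2^q + j.val)
    (S : Matrix (Fin (2^q)) (Fin (2^q)) ℤ)
    (hS : ∀ i j, S i j = sylv (k+q) (g i) (col j)) :
    S.det ≠ 0 ↔ Function.Injective (fun i => (g i).val % 2^q) := by
  have hn : 0 < 2 ^ q := Nat.pow_pos (by norm_num)
  let r : Fin (2 ^ q) → Fin (2 ^ q) := fun i => ⟨(g i).val % 2 ^ q, Nat.mod_lt _ hn⟩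
  let ε : Fin (2 ^ q) → ℤ := fun i => sgn k (((g i).val >>> q) &&& c.val)
  have hS' : ∀ i j, S i j = ε i * sylv q (r i) j := by
    intro i j
    rw [hS]
    simp only [sylv, sgn, ε, r]
    rw [hcol j, card_split k q (g i).val c.val j.val j.isLt, pow_add, mul_comm]
  have hfac : S = Matrix.of fun i j => ε i * ((sylv q).submatrix r id) i j := by
    ext i j
    exact hS' i j
  have hdet : S.det = (∏ i, ε i) * ((sylv q).submatrix r id).det := by
    rw [hfac, Matrix.det_mul_column]
  have hprod : (∏ i, ε i) ≠ 0 :=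
    Finset.prod_ne_zero_iff.mpr fun i _ => pow_ne_zero _ (by norm_num)
  have h1 : S.det ≠ 0 ↔ ((sylv q).submatrix r id).det ≠ 0 := by
    rw [hdet]
    constructor
    · intro h h0
      exact h (by rw [h0, mul_zero])
    · intro h
      exact mul_ne_zero hprod h
  have h2 : Function.Injective (fun i => (g i).val % 2 ^ q) ↔ Function.Injective r := by
    constructor <;> intro h i i' hii'
    · exact h (congrArg Fin.val hii')
    · exact h (Fin.ext hii')
  rw [h1, h2]
  constructor
  · intro hdet0
    by_contra hninj
    rw [Function.not_injective_iff] at hninj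
    obtain ⟨i, i', hreq, hne⟩ := hninj
    exact hdet0 (Matrix.det_zero_of_row_eq hne (funext fun j => by
      simp [Matrix.submatrix_apply, hreq]))
  · intro hinj
    have hbij := Finite.injective_iff_bijective.mp hinj
    have hre : (sylv q).submatrix r id = (sylv q).submatrix (Equiv.ofBijective r hbij) id := rfl
    rw [hre, Matrix.det_permute]
    exact mul_ne_zero (Units.ne_zero _) (sylv_det_ne_zero q)
end

section
/- For every p ≥ 2, the permanent of the full 2^p × 2^p Sylvester matrix H(2^p) is nonzero. (Equivalently, for n = m = 2^p > 2 the anti-bunching output of n bosons, one per each of the n modes, is never suppressed by the Sylvester interferometer.) -/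
namespace Stmt14

open Finset

theorem _root_.Equiv.Perm.inv_apply_self {α : Type*} (π : Equiv.Perm α) (x : α) : π⁻¹ (π x) = x :=
  Equiv.symm_apply_apply π x

theorem _root_.Equiv.Perm.apply_inv_self {α : Type*} (π : Equiv.Perm α) (x : α) : π (π⁻¹ x) = x :=
  Equiv.apply_symm_apply π x

/-- bit vectors of length `q` -/
abbrev V (q : ℕ) := Fin q → Bool

/-- pointwise xor -/
def vadd {q : ℕ} (r s : V q) : V q := fun t => xor (r t) (s t)

/-- the character `(-1)^{⟨r,w⟩}` -/
def χ {q : ℕ} (r w : V q) : ℤ := ∏ t, (if r t && w t then (-1 : ℤ) else 1)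

/-- signed permanent of the character matrix with row multiset `ρ` -/
def A (q : ℕ) (I : Type) [Fintype I] [DecidableEq I] (ρ : I → V q) : ℤ :=
  ∑ e : I ≃ V q, ∏ i, χ (ρ i) (e i)

/-- tail of a bit vector -/
def tl {q : ℕ} (r : V (q+1)) : V q := fun t => r t.succ

/-- fixed-point-free involution -/
def FPF {I : Type} (ι : Equiv.Perm I) : Prop := (∀ i, ι i ≠ i) ∧ (∀ i, ι (ι i) = i)

instance {I : Type} [Fintype I] [DecidableEq I] (ι : Equiv.Perm I) : Decidable (FPF ι) := by
  unfold FPF; infer_instance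

section lems
variable {q : ℕ}

lemma vadd_comm (r s : V q) : vadd r s = vadd s r := by
  funext t; simp [vadd, Bool.xor_comm]

lemma vadd_self (r : V q) : vadd r r = fun _ => false := by
  funext t; simp [vadd]

lemma vadd_cancel (r s c : V q) : vadd (vadd r c) (vadd s c) = vadd r s := by
  funext t; simp [vadd]; cases r t <;> cases s t <;> cases c t <;> rfl

lemma ite_xor (a b c : Bool) : (if (xor a b && c) then (-1:ℤ) else 1) =
    (if (a && c) then (-1:ℤ) else 1) * (if (b && c) then (-1:ℤ) else 1) := by
  cases a <;> cases b <;> cases c <;> norm_num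

lemma χ_vadd (r s w : V q) : χ (vadd r s) w = χ r w * χ s w := by
  rw [χ, χ, χ, ← Finset.prod_mul_distrib]
  exact Finset.prod_congr rfl (fun t _ => ite_xor (r t) (s t) (w t))

lemma χ_mul_self (r w : V q) : χ r w * χ r w = 1 := by
  rw [χ, ← Finset.prod_mul_distrib]
  refine Finset.prod_eq_one (fun t _ => ?_)
  cases r t <;> cases w t <;> rfl

lemma χ_split (r w : V (q+1)) :
    χ r w = (if r 0 && w 0 then (-1 : ℤ) else 1) * χ (tl r) (tl w) := by
  rw [χ, Fin.prod_univ_succ]; rfl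

end lems

lemma card_V (q : ℕ) : Fintype.card (V q) = 2 ^ q := by
  simp [Fintype.card_fun]

/-- reindexing -/
lemma A_reindex (q : ℕ) (I I' : Type) [Fintype I] [DecidableEq I] [Fintype I'] [DecidableEq I']
    (f : I' ≃ I) (ρ : I → V q) : A q I ρ = A q I' (ρ ∘ f) := by
  rw [A, A]
  refine Fintype.sum_equiv ((Equiv.equivCongr f (Equiv.refl (V q))).symm) _ _ (fun e => ?_)
  refine (Fintype.prod_equiv f _ _ (fun i' => ?_)).symm
  simp [Equiv.equivCongr]

lemma A_eq_zero (q : ℕ) (I : Type) [Fintype I] [DecidableEq I] (ρ : I → V q)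
    (h : Fintype.card I ≠ 2 ^ q) : A q I ρ = 0 := by
  haveI : IsEmpty (I ≃ V q) := by
    constructor; intro e
    exact h (by rw [Fintype.card_congr e, card_V])
  simp only [A]
  exact Fintype.sum_empty _

/-- constant rows: `A = (2^q)! · ±1` -/
lemma A_const (q : ℕ) (I : Type) [Fintype I] [DecidableEq I] (hI : Fintype.card I = 2 ^ q)
    (c : V q) : A q I (fun _ => c) = ((2^q).factorial : ℤ) * ∏ w : V q, χ c w := by
  rw [A]
  have h1 : ∀ e : I ≃ V q, ∏ i, χ c (e i) = ∏ w : V q, χ c w := fun e => Equiv.prod_comp e (χ c)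
  rw [Finset.sum_congr rfl (fun e _ => h1 e), Finset.sum_const, Finset.card_univ,
    Fintype.card_equiv (Fintype.equivOfCardEq (by rw [hI, card_V])), hI]
  simp [nsmul_eq_mul]

def bflip : Bool ≃ Bool := ⟨not, not, Bool.not_not, Bool.not_not⟩

def Jf (q : ℕ) : Bool × V q ≃ Bool × V q := Equiv.prodCongr bflip (Equiv.refl (V q))

lemma Jf_apply {q : ℕ} (x : Bool × V q) : Jf q x = (!x.1, x.2) := rfl

lemma Jf_Jf {q : ℕ} (x : Bool × V q) : Jf q (Jf q x) = x := by
  rw [Jf_apply, Jf_apply, Bool.not_not]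

section withOrder

variable {I : Type} [Fintype I] [DecidableEq I] [LinearOrder I]

def Φm (q : ℕ) (F : I ≃ Bool × V q) : Equiv.Perm I := F.trans ((Jf q).trans F.symm)

lemma Φm_apply {q : ℕ} (F : I ≃ Bool × V q) (i : I) : Φm q F i = F.symm (Jf q (F i)) := rfl

lemma Φm_FPF {q : ℕ} (F : I ≃ Bool × V q) : FPF (Φm q F) := by
  constructor
  · intro i h
    have h2 : Jf q (F i) = F i := by
      have h3 := congrArg F h
      rwa [Φm_apply, Equiv.apply_symm_apply] at h3
    have h1 : (!(F i).1) = (F i).1 := congrArg Prod.fst h2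
    cases hb : (F i).1 <;> rw [hb] at h1 <;> simp at h1
  · intro i
    rw [Φm_apply, Φm_apply, Equiv.apply_symm_apply, Jf_Jf, Equiv.symm_apply_apply]

/-- representatives (smaller element of each pair) of an involution -/
abbrev Rt (ι : Equiv.Perm I) : Type := {i : I // i < ι i}

/-- rows for the reduced problem: sums of pairs -/
def ρd {q : ℕ} (ρ : I → V (q+1)) (ι : Equiv.Perm I) : Rt ι → V q :=
  fun r => vadd (tl (ρ r.1)) (tl (ρ (ι r.1)))

/-- the (halved) bit factor -/
def ebf {q : ℕ} (ρ : I → V (q+1)) (ι : Equiv.Perm I) (r : Rt ι) : ℤ :=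
  if ρ r.1 0 = ρ (ι r.1) 0 then (if ρ r.1 0 then -1 else 1) else 0

lemma other_lt (ι : Equiv.Perm I) (hι : FPF ι) {i : I} (h : ¬ i < ι i) : ι i < ι (ι i) := by
  rw [hι.2 i]
  rcases lt_trichotomy i (ι i) with h1 | h1 | h1
  · exact absurd h1 h
  · exact absurd h1.symm (hι.1 i)
  · exact h1

/-- build a bijection `I ≃ Bool × V q` from pair data -/
def bldFun {q : ℕ} (ι : Equiv.Perm I) (hι : FPF ι) (e : Rt ι ≃ V q) (β : Rt ι → Bool)
    (i : I) : Bool × V q :=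
  if h : i < ι i then (β ⟨i, h⟩, e ⟨i, h⟩)
  else (!(β ⟨ι i, other_lt ι hι h⟩), e ⟨ι i, other_lt ι hι h⟩)

def bldInv {q : ℕ} (ι : Equiv.Perm I) (e : Rt ι ≃ V q) (β : Rt ι → Bool)
    (bw : Bool × V q) : I :=
  if β (e.symm bw.2) = bw.1 then (e.symm bw.2).1 else ι (e.symm bw.2).1

lemma bldFun_rep {q : ℕ} (ι : Equiv.Perm I) (hι : FPF ι) (e : Rt ι ≃ V q) (β : Rt ι → Bool)
    (r : Rt ι) : bldFun ι hι e β r.1 = (β r, e r) := by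
  rw [bldFun, dif_pos r.2]

lemma bldFun_other {q : ℕ} (ι : Equiv.Perm I) (hι : FPF ι) (e : Rt ι ≃ V q) (β : Rt ι → Bool)
    (r : Rt ι) : bldFun ι hι e β (ι r.1) = (!(β r), e r) := by
  have hn : ¬ ι r.1 < ι (ι r.1) := by
    rw [hι.2]
    exact not_lt.mpr (le_of_lt r.2)
  rw [bldFun, dif_neg hn]
  have hr : (⟨ι (ι r.1), other_lt ι hι hn⟩ : Rt ι) = r := Subtype.ext (hι.2 _)
  rw [hr]

def bld {q : ℕ} (ι : Equiv.Perm I) (hι : FPF ι) (e : Rt ι ≃ V q) (β : Rt ι → Bool) :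
    I ≃ Bool × V q where
  toFun := bldFun ι hι e β
  invFun := bldInv ι e β
  left_inv := by
    intro i
    by_cases h : i < ι i
    · rw [bldFun_rep ι hι e β ⟨i, h⟩, bldInv]
      simp
    · set r : Rt ι := ⟨ι i, other_lt ι hι h⟩ with hrdef
      have hi : ι r.1 = i := hι.2 i
      have h1 : bldFun ι hι e β i = (!(β r), e r) := by
        conv_lhs => rw [← hi]
        exact bldFun_other ι hι e β r
      rw [h1, bldInv]
      simp only [Equiv.symm_apply_apply]
      rw [if_neg (by cases β r <;> simp)]
      exact hi
  right_inv := by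
    rintro ⟨b, w⟩
    by_cases hb : β (e.symm w) = b
    · have h1 : bldInv ι e β (b, w) = (e.symm w).1 := if_pos hb
      rw [h1, bldFun_rep ι hι e β (e.symm w), Equiv.apply_symm_apply, hb]
    · have h1 : bldInv ι e β (b, w) = ι (e.symm w).1 := if_neg hb
      rw [h1, bldFun_other ι hι e β (e.symm w), Equiv.apply_symm_apply]
      have h2 : (!β (e.symm w)) = b := by
        cases hx : β (e.symm w) <;> cases hy : b <;> simp_all
      rw [h2]

lemma bld_rep {q : ℕ} (ι : Equiv.Perm I) (hι : FPF ι) (e : Rt ι ≃ V q) (β : Rt ι → Bool)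
    (r : Rt ι) : bld ι hι e β r.1 = (β r, e r) := bldFun_rep ι hι e β r

lemma bld_other {q : ℕ} (ι : Equiv.Perm I) (hι : FPF ι) (e : Rt ι ≃ V q) (β : Rt ι → Bool)
    (r : Rt ι) : bld ι hι e β (ι r.1) = (!(β r), e r) := bldFun_other ι hι e β r

lemma Φm_bld {q : ℕ} (ι : Equiv.Perm I) (hι : FPF ι) (e : Rt ι ≃ V q) (β : Rt ι → Bool) :
    Φm q (bld ι hι e β) = ι := by
  ext i
  rw [Φm_apply]
  by_cases h : i < ι i
  · have h1 : bld ι hι e β i = (β ⟨i, h⟩, e ⟨i, h⟩) := bld_rep ι hι e β ⟨i, h⟩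
    rw [h1, Jf_apply, Equiv.symm_apply_eq]
    exact (bld_other ι hι e β ⟨i, h⟩).symm
  · set r : Rt ι := ⟨ι i, other_lt ι hι h⟩ with hrdef
    have hi : ι r.1 = i := hι.2 i
    have h1 : bld ι hι e β i = (!(β r), e r) := by
      conv_lhs => rw [← hi]
      exact bld_other ι hι e β r
    rw [h1, Jf_apply, Equiv.symm_apply_eq]
    show (!!(β r), e r) = bld ι hι e β (ι i)
    rw [Bool.not_not]
    exact (bld_rep ι hι e β r).symm

lemma bld_bij {q : ℕ} (ι : Equiv.Perm I) (hι : FPF ι) :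
    Function.Bijective (fun p : (Rt ι ≃ V q) × (Rt ι → Bool) =>
      (⟨bld ι hι p.1 p.2, Φm_bld ι hι p.1 p.2⟩ :
        {F : I ≃ Bool × V q // Φm q F = ι})) := by
  constructor
  · rintro ⟨e, β⟩ ⟨e', β'⟩ hEq
    have hEq2 : bld ι hι e β = bld ι hι e' β' := congrArg Subtype.val hEq
    have hpt : ∀ r : Rt ι, (β r, e r) = (β' r, e' r) := by
      intro r
      rw [← bld_rep ι hι e β r, ← bld_rep ι hι e' β' r, hEq2]
    have he : e = e' := Equiv.ext (fun r => congrArg Prod.snd (hpt r))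
    have hβ : β = β' := funext (fun r => congrArg Prod.fst (hpt r))
    rw [he, hβ]
  · rintro ⟨F, hF⟩
    have key : ∀ i, F (ι i) = (!(F i).1, (F i).2) := by
      intro i
      have h1 : Φm q F i = ι i := by rw [hF]
      rw [Φm_apply, Equiv.symm_apply_eq] at h1
      rw [← h1, Jf_apply]
    have hinj : Function.Injective (fun r : Rt ι => (F r.1).2) := by
      intro r r' h
      by_cases hb : (F r.1).1 = (F r'.1).1
      · have hFF : F r.1 = F r'.1 := Prod.ext hb h
        exact Subtype.ext (F.injective hFF)
      · exfalso
        have h2 : F r'.1 = F (ι r.1) := by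
          rw [key r.1]
          refine Prod.ext ?_ h.symm
          cases hx : (F r.1).1 <;> cases hx' : (F r'.1).1 <;> simp_all
        have h3 : r'.1 = ι r.1 := F.injective h2
        have h4 := r'.2
        rw [h3, hι.2] at h4
        exact absurd (h4.trans r.2) (lt_irrefl _)
    have hsurj : Function.Surjective (fun r : Rt ι => (F r.1).2) := by
      intro w
      by_cases h : F.symm (false, w) < ι (F.symm (false, w))
      · refine ⟨⟨F.symm (false, w), h⟩, ?_⟩
        show (F (F.symm (false, w))).2 = w
        rw [Equiv.apply_symm_apply]
      · refine ⟨⟨ι (F.symm (false, w)), other_lt ι hι h⟩, ?_⟩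
        show (F (ι (F.symm (false, w)))).2 = w
        rw [key, Equiv.apply_symm_apply]
    refine ⟨⟨Equiv.ofBijective _ ⟨hinj, hsurj⟩, fun r => (F r.1).1⟩, ?_⟩
    refine Subtype.ext ?_
    refine Equiv.ext (fun i => ?_)
    by_cases h : i < ι i
    · have := bld_rep ι hι (Equiv.ofBijective _ ⟨hinj, hsurj⟩) (fun r => (F r.1).1) ⟨i, h⟩
      rw [this]
      rfl
    · set r : Rt ι := ⟨ι i, other_lt ι hι h⟩ with hrdef
      have hi : ι r.1 = i := hι.2 i
      conv_lhs => rw [← hi]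
      rw [bld_other ι hι (Equiv.ofBijective _ ⟨hinj, hsurj⟩) (fun r => (F r.1).1) r]
      rw [← hi, key r.1]
      rfl

lemma sfac_sum (x y : Bool) :
    ∑ b : Bool, ((if x && b then (-1:ℤ) else 1) * (if y && !b then (-1:ℤ) else 1))
      = 2 * (if x = y then (if x then (-1:ℤ) else 1) else 0) := by
  rw [Fintype.sum_bool]
  cases x <;> cases y <;> norm_num

lemma lt_gt_disj (ι : Equiv.Perm I) :
    Disjoint (Finset.univ.filter (fun i : I => i < ι i))
      (Finset.univ.filter (fun i : I => ι i < i)) := by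
  rw [Finset.disjoint_filter]
  intro i _ h1 h2
  exact absurd (h1.trans h2) (lt_irrefl i)

lemma lt_gt_union (ι : Equiv.Perm I) (hι : FPF ι) :
    (Finset.univ.filter (fun i : I => i < ι i)) ∪ (Finset.univ.filter (fun i : I => ι i < i))
      = Finset.univ := by
  ext i
  simp only [Finset.mem_union, Finset.mem_filter, Finset.mem_univ, true_and, iff_true]
  rcases lt_trichotomy i (ι i) with h | h | h
  · exact Or.inl h
  · exact absurd h.symm (hι.1 i)
  · exact Or.inr h

lemma prod_gt_eq {M : Type} [CommMonoid M] (ι : Equiv.Perm I) (hι : FPF ι) (h : I → M) :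
    ∏ i ∈ Finset.univ.filter (fun i : I => ι i < i), h i
      = ∏ i ∈ Finset.univ.filter (fun i : I => i < ι i), h (ι i) := by
  refine Finset.prod_nbij' (fun i => ι i) (fun i => ι i) ?_ ?_ ?_ ?_ ?_
  · intro a ha
    simp only [Finset.mem_filter, Finset.mem_univ, true_and] at ha ⊢
    rw [hι.2 a]; exact ha
  · intro a ha
    simp only [Finset.mem_filter, Finset.mem_univ, true_and] at ha ⊢
    rw [hι.2 a]; exact ha
  · intro a _; exact hι.2 a
  · intro a _; exact hι.2 a
  · intro a _; rw [hι.2 a]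

lemma pairProd {M : Type} [CommMonoid M] (ι : Equiv.Perm I) (hι : FPF ι) (h : I → M) :
    ∏ i, h i = ∏ r : Rt ι, (h r.1 * h (ι r.1)) := by
  rw [← lt_gt_union ι hι, Finset.prod_union (lt_gt_disj ι), prod_gt_eq ι hι h,
    ← Finset.prod_mul_distrib]
  exact Finset.prod_subtype (Finset.univ.filter (fun i : I => i < ι i))
    (fun x => by simp only [Finset.mem_filter, Finset.mem_univ, true_and])
    (fun i => h i * h (ι i))

lemma card_Rt (ι : Equiv.Perm I) (hι : FPF ι) : 2 * Fintype.card (Rt ι) = Fintype.card I := by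
  have h1 : Fintype.card (Rt ι) = (Finset.univ.filter (fun i : I => i < ι i)).card :=
    Fintype.card_subtype _
  have h2 : (Finset.univ.filter (fun i : I => ι i < i)).card
      = (Finset.univ.filter (fun i : I => i < ι i)).card := by
    refine Finset.card_nbij' (fun i => ι i) (fun i => ι i) ?_ ?_ ?_ ?_
    · intro a ha
      simp only [Finset.mem_coe, Finset.mem_filter, Finset.mem_univ, true_and] at ha ⊢
      rw [hι.2 a]; exact ha
    · intro a ha
      simp only [Finset.mem_coe, Finset.mem_filter, Finset.mem_univ, true_and] at ha ⊢
      rw [hι.2 a]; exact ha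
    · intro a _; exact hι.2 a
    · intro a _; exact hι.2 a
  have h3 := Finset.card_union_of_disjoint (lt_gt_disj ι)
  rw [lt_gt_union ι hι, h2] at h3
  rw [h1, Finset.card_univ] at *
  omega

/-- The master recursion -/
theorem Arec (q : ℕ) (ρ : I → V (q+1)) :
    A (q+1) I ρ = ∑ ι ∈ Finset.univ.filter (fun ι : Equiv.Perm I => FPF ι),
      (∏ r : Rt ι, (2 * ebf ρ ι r)) * A q (Rt ι) (ρd ρ ι) := by
  classical
  have step1 : A (q+1) I ρ = ∑ F : I ≃ Bool × V q,
      ∏ i, ((if ρ i 0 && (F i).1 then (-1:ℤ) else 1) * χ (tl (ρ i)) ((F i).2)) := by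
    rw [A]
    refine Fintype.sum_equiv (Equiv.equivCongr (Equiv.refl I) (Fin.consEquiv (fun _ : Fin (q+1) => Bool)).symm) _ _
      (fun e => ?_)
    refine Finset.prod_congr rfl (fun i _ => ?_)
    rw [χ_split]
    rfl
  rw [step1, ← Fintype.sum_fiberwise (Φm q) (fun F : I ≃ Bool × V q =>
      ∏ i, ((if ρ i 0 && (F i).1 then (-1:ℤ) else 1) * χ (tl (ρ i)) ((F i).2)))]
  rw [← Finset.sum_filter_of_ne (p := fun ι : Equiv.Perm I => FPF ι) (s := Finset.univ)
    (f := fun ι => ∑ Fs : {F : I ≃ Bool × V q // Φm q F = ι},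
      ∏ i, ((if ρ i 0 && ((Fs : I ≃ Bool × V q) i).1 then (-1:ℤ) else 1)
        * χ (tl (ρ i)) (((Fs : I ≃ Bool × V q)) i).2)) ?hne]
  case hne =>
    intro ι _ hne
    by_contra hfpf
    apply hne
    haveI : IsEmpty {F : I ≃ Bool × V q // Φm q F = ι} := by
      constructor
      intro Fs
      exact hfpf (Fs.2 ▸ Φm_FPF Fs.1)
    exact Fintype.sum_empty _
  refine Finset.sum_congr rfl (fun ι hmem => ?_)
  rw [Finset.mem_filter] at hmem
  have hι : FPF ι := hmem.2
  rw [← Function.Bijective.sum_comp (bld_bij ι hι)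
    (fun Fs : {F : I ≃ Bool × V q // Φm q F = ι} =>
      ∏ i, ((if ρ i 0 && ((Fs : I ≃ Bool × V q) i).1 then (-1:ℤ) else 1)
        * χ (tl (ρ i)) (((Fs : I ≃ Bool × V q)) i).2))]
  rw [Fintype.sum_prod_type]
  have inner : ∀ (e : Rt ι ≃ V q) (β : Rt ι → Bool),
      (∏ i, ((if ρ i 0 && ((bld ι hι e β) i).1 then (-1:ℤ) else 1)
          * χ (tl (ρ i)) ((bld ι hι e β) i).2))
      = (∏ r : Rt ι, ((if ρ r.1 0 && β r then (-1:ℤ) else 1)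
          * (if ρ (ι r.1) 0 && !(β r) then (-1:ℤ) else 1)))
        * ∏ r : Rt ι, χ (ρd ρ ι r) (e r) := by
    intro e β
    rw [pairProd ι hι]
    rw [← Finset.prod_mul_distrib]
    refine Finset.prod_congr rfl (fun r _ => ?_)
    rw [bld_rep ι hι e β r, bld_other ι hι e β r]
    show ((if ρ r.1 0 && β r then (-1:ℤ) else 1) * χ (tl (ρ r.1)) (e r))
        * ((if ρ (ι r.1) 0 && !(β r) then (-1:ℤ) else 1) * χ (tl (ρ (ι r.1))) (e r)) = _
    rw [ρd, χ_vadd]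
    ring
  calc ∑ e : Rt ι ≃ V q, ∑ β : Rt ι → Bool,
        (∏ i, ((if ρ i 0 && ((bld ι hι e β) i).1 then (-1:ℤ) else 1)
          * χ (tl (ρ i)) ((bld ι hι e β) i).2))
      = ∑ e : Rt ι ≃ V q, ∑ β : Rt ι → Bool,
        ((∏ r : Rt ι, ((if ρ r.1 0 && β r then (-1:ℤ) else 1)
          * (if ρ (ι r.1) 0 && !(β r) then (-1:ℤ) else 1)))
          * ∏ r : Rt ι, χ (ρd ρ ι r) (e r)) := by
        exact Finset.sum_congr rfl (fun e _ => Finset.sum_congr rfl (fun β _ => inner e β))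
    _ = ∑ e : Rt ι ≃ V q, (∑ β : Rt ι → Bool,
          ∏ r : Rt ι, ((if ρ r.1 0 && β r then (-1:ℤ) else 1)
            * (if ρ (ι r.1) 0 && !(β r) then (-1:ℤ) else 1)))
          * ∏ r : Rt ι, χ (ρd ρ ι r) (e r) := by
        exact Finset.sum_congr rfl (fun e _ => (Finset.sum_mul _ _ _).symm)
    _ = ∑ e : Rt ι ≃ V q, (∏ r : Rt ι, (2 * ebf ρ ι r)) * ∏ r : Rt ι, χ (ρd ρ ι r) (e r) := by
        refine Finset.sum_congr rfl (fun e _ => ?_)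
        congr 1
        rw [← Fintype.prod_sum (fun (r : Rt ι) (b : Bool) =>
          (if ρ r.1 0 && b then (-1:ℤ) else 1) * (if ρ (ι r.1) 0 && !b then (-1:ℤ) else 1))]
        refine Finset.prod_congr rfl (fun r _ => ?_)
        rw [sfac_sum]
        rfl
    _ = (∏ r : Rt ι, (2 * ebf ρ ι r)) * A q (Rt ι) (ρd ρ ι) := by
        rw [A, Finset.mul_sum]

end withOrder

/-- divisibility -/
theorem S1 : ∀ (q : ℕ) (I : Type) [Fintype I] [DecidableEq I] (ρ : I → V q),
    (2:ℤ) ^ (2 ^ q - 1) ∣ A q I ρ := by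
  intro q
  induction q with
  | zero =>
    intro I _ _ ρ
    simpa using one_dvd _
  | succ q ih =>
    intro I _ _ ρ
    letI : LinearOrder I := LinearOrder.lift' (fun i => (Fintype.equivFin I) i)
      (Fintype.equivFin I).injective
    by_cases hc : Fintype.card I = 2 ^ (q+1)
    · rw [Arec q ρ]
      refine Finset.dvd_sum (fun ι hmem => ?_)
      have hι : FPF ι := (Finset.mem_filter.mp hmem).2
      have hcard : Fintype.card (Rt ι) = 2 ^ q := by
        have h := card_Rt ι hι
        rw [hc, pow_succ] at h
        omega
      have h1 : (2:ℤ) ^ (2^q) ∣ ∏ r : Rt ι, (2 * ebf ρ ι r) := by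
        have h2 : ∏ _r : Rt ι, (2:ℤ) ∣ ∏ r : Rt ι, (2 * ebf ρ ι r) :=
          Finset.prod_dvd_prod_of_dvd _ _ (fun r _ => ⟨ebf ρ ι r, rfl⟩)
        rwa [Finset.prod_const, Finset.card_univ, hcard] at h2
      have h3 := mul_dvd_mul h1 (ih (Rt ι) (ρd ρ ι))
      rwa [← pow_add, show 2^q + (2^q - 1) = 2^(q+1) - 1 by
        (have := Nat.one_le_two_pow (n := q); rw [pow_succ]; omega)] at h3
    · rw [A_eq_zero _ _ _ hc]
      exact dvd_zero _

/-- normalized permanent -/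
def Ahat (q : ℕ) (I : Type) [Fintype I] [DecidableEq I] (ρ : I → V q) : ℤ :=
  A q I ρ / 2 ^ (2 ^ q - 1)

lemma Ahat_spec (q : ℕ) (I : Type) [Fintype I] [DecidableEq I] (ρ : I → V q) :
    A q I ρ = 2 ^ (2 ^ q - 1) * Ahat q I ρ :=
  (Int.mul_ediv_cancel' (S1 q I ρ)).symm

/-- 2-adic valuation of `(2^q)!` -/
lemma sum_range_two_pow (q : ℕ) : ∑ j ∈ Finset.range q, 2 ^ j = 2 ^ q - 1 := by
  induction q with
  | zero => simp
  | succ n ih =>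
    rw [Finset.sum_range_succ, ih, pow_succ]
    have : 1 ≤ 2 ^ n := Nat.one_le_two_pow
    omega

lemma factorial_odd_part (q : ℕ) :
    ∃ m : ℤ, Odd m ∧ ((2^q).factorial : ℤ) = 2 ^ (2 ^ q - 1) * m := by
  haveI : Fact (Nat.Prime 2) := ⟨Nat.prime_two⟩
  have hv : padicValNat 2 ((2^q).factorial) = 2 ^ q - 1 := by
    rw [padicValNat_factorial (p := 2) (b := q + 1)
      (by rw [Nat.log_pow one_lt_two]; omega)]
    have hterm : ∀ i ∈ Finset.Ico 1 (q+1), 2 ^ q / 2 ^ i = 2 ^ (q - i) := by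
      intro i hi
      simp only [Finset.mem_Ico] at hi
      rw [Nat.pow_div (by omega) (by norm_num)]
    rw [Finset.sum_congr rfl hterm, Finset.sum_Ico_eq_sum_range]
    simp only [Nat.add_sub_cancel]
    have hterm2 : ∀ j ∈ Finset.range q, 2 ^ (q - (1 + j)) = 2 ^ (q - 1 - j) := by
      intro j hj; congr 1; omega
    rw [Finset.sum_congr rfl hterm2, Finset.sum_range_reflect (fun j => 2 ^ j) q,
      sum_range_two_pow]
  have h1 : (2:ℕ) ^ (2 ^ q - 1) ∣ (2^q).factorial := hv ▸ pow_padicValNat_dvd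
  have h2 : ¬ (2:ℕ) ^ (2 ^ q) ∣ (2^q).factorial := by
    have hne : (2^q).factorial ≠ 0 := Nat.factorial_ne_zero _
    have := pow_succ_padicValNat_not_dvd (p := 2) hne
    rw [hv] at this
    have e : 2 ^ q - 1 + 1 = 2 ^ q := by
      have : 1 ≤ 2 ^ q := Nat.one_le_two_pow
      omega
    rwa [e] at this
  obtain ⟨m, hm⟩ := h1
  refine ⟨(m : ℤ), ?_, by exact_mod_cast hm⟩
  rw [Int.odd_coe_nat]
  rcases Nat.even_or_odd m with he | ho
  · exfalso
    obtain ⟨k, hk⟩ := he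
    apply h2
    refine ⟨k, ?_⟩
    have e2 : 2 ^ (2 ^ q - 1) * (k + k) = 2 ^ (2 ^ q - 1 + 1) * k := by
      rw [pow_succ]; ring
    rw [hm, hk, e2]
    congr 2
    have : 1 ≤ 2 ^ q := Nat.one_le_two_pow
    omega
  · exact ho

lemma Ahat_const (q : ℕ) (I : Type) [Fintype I] [DecidableEq I] (hI : Fintype.card I = 2 ^ q)
    (c : V q) : (Ahat q I (fun _ => c) : ZMod 2) = 1 := by
  obtain ⟨m, hm, hfac⟩ := factorial_odd_part q
  have hA : Ahat q I (fun _ => c) = m * ∏ w : V q, χ c w := by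
    rw [Ahat, A_const q I hI c, hfac, mul_assoc,
      Int.mul_ediv_cancel_left _ (by positivity)]
  rw [hA]
  have hmm : ((m : ZMod 2)) = 1 := by
    obtain ⟨k, rfl⟩ := hm
    push_cast
    have : ((2 : ℤ) : ZMod 2) = 0 := by decide
    push_cast at this ⊢
    rw [show ((2:ZMod 2)) = 0 by decide]
    ring
  have hP : ((∏ w : V q, χ c w : ℤ) : ZMod 2) = 1 := by
    have hsq : (∏ w : V q, χ c w) * (∏ w : V q, χ c w) = 1 := by
      rw [← Finset.prod_mul_distrib]
      exact Finset.prod_eq_one (fun w _ => χ_mul_self c w)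
    have : ((∏ w : V q, χ c w : ℤ) : ZMod 2) * ((∏ w : V q, χ c w : ℤ) : ZMod 2) = 1 := by
      rw [← Int.cast_mul, hsq]; norm_num
    revert this
    generalize ((∏ w : V q, χ c w : ℤ) : ZMod 2) = x
    revert x; decide
  rw [Int.cast_mul, hmm, hP, one_mul]

section keyrec
variable {I : Type} [Fintype I] [DecidableEq I] [LinearOrder I]

theorem AhatRec (q : ℕ) (ρ : I → V (q+1)) (hI : Fintype.card I = 2 ^ (q+1)) :
    Ahat (q+1) I ρ = ∑ ι ∈ Finset.univ.filter (fun ι : Equiv.Perm I => FPF ι),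
      (∏ r : Rt ι, ebf ρ ι r) * Ahat q (Rt ι) (ρd ρ ι) := by
  have h2 : (0:ℤ) < 2 ^ (2^(q+1) - 1) := by positivity
  refine Int.eq_of_mul_eq_mul_left (ne_of_gt h2) ?_
  rw [← Ahat_spec, Arec q ρ, Finset.mul_sum]
  refine Finset.sum_congr rfl (fun ι hmem => ?_)
  have hι : FPF ι := (Finset.mem_filter.mp hmem).2
  have hcard : Fintype.card (Rt ι) = 2 ^ q := by
    have h := card_Rt ι hι
    rw [hI, pow_succ] at h
    omega
  have hexp : (2:ℤ)^(2^q) * 2^(2^q - 1) = 2^(2^(q+1) - 1) := by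
    rw [← pow_add]
    congr 1
    have := Nat.one_le_two_pow (n := q)
    rw [pow_succ]
    omega
  calc (∏ r : Rt ι, (2 * ebf ρ ι r)) * A q (Rt ι) (ρd ρ ι)
      = ((2:ℤ)^(2^q) * ∏ r : Rt ι, ebf ρ ι r)
          * (2^(2^q - 1) * Ahat q (Rt ι) (ρd ρ ι)) := by
        rw [← Ahat_spec, Finset.prod_mul_distrib, Finset.prod_const, Finset.card_univ, hcard]
    _ = ((2:ℤ)^(2^q) * 2^(2^q - 1))
          * ((∏ r : Rt ι, ebf ρ ι r) * Ahat q (Rt ι) (ρd ρ ι)) := by ring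
    _ = 2^(2^(q+1) - 1) * ((∏ r : Rt ι, ebf ρ ι r) * Ahat q (Rt ι) (ρd ρ ι)) := by rw [hexp]

/-- the mod-2 value of a term -/
noncomputable def val (q : ℕ) (ρ : I → V (q+1)) (ι : Equiv.Perm I) : ZMod 2 :=
  if FPF ι then ((((∏ r : Rt ι, ebf ρ ι r) * Ahat q (Rt ι) (ρd ρ ι) : ℤ) : ZMod 2)) else 0

theorem AhatRec2 (q : ℕ) (ρ : I → V (q+1)) (hI : Fintype.card I = 2 ^ (q+1)) :
    ((Ahat (q+1) I ρ : ℤ) : ZMod 2) = ∑ ι : Equiv.Perm I, val q ρ ι := by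
  rw [AhatRec q ρ hI, Finset.sum_filter, Int.cast_sum]
  refine Finset.sum_congr rfl (fun ι _ => ?_)
  rw [val, apply_ite (fun z : ℤ => (z : ZMod 2))]
  simp only [Int.cast_zero]

lemma FPF_conj_of (π ι : Equiv.Perm I) (h : FPF ι) : FPF (π * ι * π⁻¹) := by
  obtain ⟨h1, h2⟩ := h
  constructor
  · intro i hcon
    simp only [Equiv.Perm.mul_apply] at hcon
    apply h1 (π⁻¹ i)
    have h3 := congrArg (fun x => π⁻¹ x) hcon
    simpa using h3
  · intro i
    simp only [Equiv.Perm.mul_apply, Equiv.Perm.inv_apply_self]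
    rw [h2, Equiv.Perm.apply_inv_self]

lemma FPF_conj (π ι : Equiv.Perm I) : FPF (π * ι * π⁻¹) ↔ FPF ι := by
  constructor
  · intro h
    have h2 := FPF_conj_of π⁻¹ (π * ι * π⁻¹) h
    have h3 : π⁻¹ * (π * ι * π⁻¹) * π⁻¹⁻¹ = ι := by group
    rwa [h3] at h2
  · exact FPF_conj_of π ι

lemma conj_apply (π ι : Equiv.Perm I) (j : I) : (π * ι * π⁻¹) (π j) = π (ι j) := by
  simp only [Equiv.Perm.mul_apply, Equiv.Perm.inv_apply_self]

def ψFun (π ι : Equiv.Perm I) (hι : FPF ι) (r' : Rt (π * ι * π⁻¹)) : Rt ι :=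
  if h : π⁻¹ r'.1 < ι (π⁻¹ r'.1) then ⟨π⁻¹ r'.1, h⟩
  else ⟨ι (π⁻¹ r'.1), other_lt ι hι h⟩

def ψInv (π ι : Equiv.Perm I) (hι' : FPF (π * ι * π⁻¹)) (r : Rt ι) : Rt (π * ι * π⁻¹) :=
  if h : π r.1 < (π * ι * π⁻¹) (π r.1) then ⟨π r.1, h⟩
  else ⟨(π * ι * π⁻¹) (π r.1), other_lt _ hι' h⟩

/-- the bijection between representatives of `π ι π⁻¹` and those of `ι` -/
def ψm (π ι : Equiv.Perm I) (hι : FPF ι) (hι' : FPF (π * ι * π⁻¹)) :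
    Rt (π * ι * π⁻¹) ≃ Rt ι where
  toFun := ψFun π ι hι
  invFun := ψInv π ι hι'
  left_inv := by
    rintro ⟨i, hi⟩
    have hπj : π (π⁻¹ i) = i := Equiv.Perm.apply_inv_self π i
    by_cases h : π⁻¹ i < ι (π⁻¹ i)
    · have e1 : ψFun π ι hι ⟨i, hi⟩ = ⟨π⁻¹ i, h⟩ := dif_pos h
      rw [e1]
      have hcond : π (π⁻¹ i) < (π * ι * π⁻¹) (π (π⁻¹ i)) := by rw [hπj]; exact hi
      have e2 : ψInv π ι hι' ⟨π⁻¹ i, h⟩ = ⟨π (π⁻¹ i), hcond⟩ := dif_pos hcond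
      rw [e2]
      exact Subtype.ext hπj
    · have e1 : ψFun π ι hι ⟨i, hi⟩ = ⟨ι (π⁻¹ i), other_lt ι hι h⟩ := dif_neg h
      rw [e1]
      have hval : (π * ι * π⁻¹) (π (ι (π⁻¹ i))) = i := by rw [conj_apply, hι.2, hπj]
      have hi2 : i < π (ι (π⁻¹ i)) := by
        have h4 : (π * ι * π⁻¹) i = π (ι (π⁻¹ i)) := by
          conv_lhs => rw [← hπj]
          rw [conj_apply]
        rw [← h4]
        exact hi
      have hcond : ¬ π (ι (π⁻¹ i)) < (π * ι * π⁻¹) (π (ι (π⁻¹ i))) := by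
        rw [hval]
        exact not_lt.mpr (le_of_lt hi2)
      have e2 : ψInv π ι hι' ⟨ι (π⁻¹ i), other_lt ι hι h⟩
          = ⟨(π * ι * π⁻¹) (π (ι (π⁻¹ i))), other_lt _ hι' hcond⟩ := dif_neg hcond
      rw [e2]
      exact Subtype.ext hval
  right_inv := by
    rintro ⟨i, hi⟩
    by_cases h : π i < (π * ι * π⁻¹) (π i)
    · have e1 : ψInv π ι hι' ⟨i, hi⟩ = ⟨π i, h⟩ := dif_pos h
      rw [e1]
      have hcond : π⁻¹ (π i) < ι (π⁻¹ (π i)) := by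
        rw [Equiv.Perm.inv_apply_self]
        exact hi
      have e2 : ψFun π ι hι ⟨π i, h⟩ = ⟨π⁻¹ (π i), hcond⟩ := dif_pos hcond
      rw [e2]
      exact Subtype.ext (Equiv.Perm.inv_apply_self π i)
    · have e1 : ψInv π ι hι' ⟨i, hi⟩
          = ⟨(π * ι * π⁻¹) (π i), other_lt _ hι' h⟩ := dif_neg h
      rw [e1]
      have he : π⁻¹ ((π * ι * π⁻¹) (π i)) = ι i := by
        rw [conj_apply, Equiv.Perm.inv_apply_self]
      have hcond : ¬ π⁻¹ ((π * ι * π⁻¹) (π i)) < ι (π⁻¹ ((π * ι * π⁻¹) (π i))) := by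
        rw [he, hι.2]
        exact not_lt.mpr (le_of_lt hi)
      have e2 : ψFun π ι hι ⟨(π * ι * π⁻¹) (π i), other_lt _ hι' h⟩
          = ⟨ι (π⁻¹ ((π * ι * π⁻¹) (π i))), other_lt ι hι hcond⟩ := dif_neg hcond
      rw [e2]
      refine Subtype.ext ?_
      show ι (π⁻¹ ((π * ι * π⁻¹) (π i))) = i
      rw [he, hι.2]

/-- bit-pair value -/
def ebv (x y : Bool) : ℤ := if x = y then (if x then -1 else 1) else 0

lemma ebv_symm (x y : Bool) : ebv y x = ebv x y := by
  cases x <;> cases y <;> rfl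

lemma ebv_neg (x y : Bool) : ebv (!x) (!y) = ebv x y * (if x = y then (-1:ℤ) else 1) := by
  cases x <;> cases y <;> norm_num [ebv]

lemma ebf_eq_ebv {q : ℕ} (ρ : I → V (q+1)) (ι : Equiv.Perm I) (r : Rt ι) :
    ebf ρ ι r = ebv (ρ r.1 0) (ρ (ι r.1) 0) := rfl

lemma ebf_ψm {q : ℕ} (ρ : I → V (q+1)) (π ι : Equiv.Perm I) (hι : FPF ι)
    (hι' : FPF (π * ι * π⁻¹)) (r' : Rt (π * ι * π⁻¹)) :
    ebf ρ ι (ψm π ι hι hι' r') = ebv (ρ (π⁻¹ r'.1) 0) (ρ (ι (π⁻¹ r'.1)) 0) := by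
  show ebf ρ ι (ψFun π ι hι r') = _
  by_cases h : π⁻¹ r'.1 < ι (π⁻¹ r'.1)
  · rw [show ψFun π ι hι r' = ⟨π⁻¹ r'.1, h⟩ from dif_pos h]
    rfl
  · rw [show ψFun π ι hι r' = ⟨ι (π⁻¹ r'.1), other_lt ι hι h⟩ from dif_neg h]
    rw [ebf_eq_ebv]
    show ebv (ρ (ι (π⁻¹ r'.1)) 0) (ρ (ι (ι (π⁻¹ r'.1))) 0) = _
    rw [hι.2, ebv_symm]

lemma ρd_ψm {q : ℕ} (ρ : I → V (q+1)) (π ι : Equiv.Perm I) (hι : FPF ι)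
    (hι' : FPF (π * ι * π⁻¹)) (r' : Rt (π * ι * π⁻¹)) :
    ρd ρ ι (ψm π ι hι hι' r') = vadd (tl (ρ (π⁻¹ r'.1))) (tl (ρ (ι (π⁻¹ r'.1)))) := by
  show ρd ρ ι (ψFun π ι hι r') = _
  by_cases h : π⁻¹ r'.1 < ι (π⁻¹ r'.1)
  · rw [show ψFun π ι hι r' = ⟨π⁻¹ r'.1, h⟩ from dif_pos h]
    rfl
  · rw [show ψFun π ι hι r' = ⟨ι (π⁻¹ r'.1), other_lt ι hι h⟩ from dif_neg h]
    show vadd (tl (ρ (ι (π⁻¹ r'.1)))) (tl (ρ (ι (ι (π⁻¹ r'.1))))) = _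
    rw [hι.2, vadd_comm]

/-- conjugation invariance of `val` -/
theorem conj_val (q : ℕ) (ρ : I → V (q+1)) (π : Equiv.Perm I)
    (H1 : ∃ c, ∀ i, tl (ρ (π i)) = vadd (tl (ρ i)) c)
    (H2 : (∀ i, ρ (π i) 0 = ρ i 0) ∨ (∀ i, ρ (π i) 0 = !(ρ i 0))) (ι : Equiv.Perm I) :
    val q ρ (π * ι * π⁻¹) = val q ρ ι := by
  by_cases hι : FPF ι
  · have hι' : FPF (π * ι * π⁻¹) := FPF_conj_of π ι hι
    rw [val, val, if_pos hι', if_pos hι]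
    obtain ⟨c, hc⟩ := H1
    set ψ := ψm π ι hι hι' with hψdef
    -- rows match
    have hrow : ∀ r' : Rt (π * ι * π⁻¹), ρd ρ (π * ι * π⁻¹) r' = ρd ρ ι (ψ r') := by
      intro r'
      have hπj : π (π⁻¹ r'.1) = r'.1 := Equiv.Perm.apply_inv_self π r'.1
      have hιr' : (π * ι * π⁻¹) r'.1 = π (ι (π⁻¹ r'.1)) := by
        conv_lhs => rw [← hπj]
        rw [conj_apply]
      have lhs_eq : ρd ρ (π * ι * π⁻¹) r' = vadd (tl (ρ (π⁻¹ r'.1))) (tl (ρ (ι (π⁻¹ r'.1)))) := by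
        have t1 : tl (ρ r'.1) = vadd (tl (ρ (π⁻¹ r'.1))) c := by
          conv_lhs => rw [← hπj]
          exact hc (π⁻¹ r'.1)
        have t2 : tl (ρ ((π * ι * π⁻¹) r'.1)) = vadd (tl (ρ (ι (π⁻¹ r'.1)))) c := by
          rw [hιr']
          exact hc (ι (π⁻¹ r'.1))
        show vadd (tl (ρ r'.1)) (tl (ρ ((π * ι * π⁻¹) r'.1))) = _
        rw [t1, t2, vadd_cancel]
      rw [lhs_eq, ρd_ψm]
    -- A-values match
    have hA : A q (Rt (π * ι * π⁻¹)) (ρd ρ (π * ι * π⁻¹)) = A q (Rt ι) (ρd ρ ι) := by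
      rw [A_reindex q (Rt ι) (Rt (π * ι * π⁻¹)) ψ (ρd ρ ι)]
      congr 1
      funext r'
      exact hrow r' 
    have hAhat : Ahat q (Rt (π * ι * π⁻¹)) (ρd ρ (π * ι * π⁻¹)) = Ahat q (Rt ι) (ρd ρ ι) := by
      rw [Ahat, Ahat, hA]
    rw [hAhat]
    -- products of ebf match up to sign
    rcases H2 with h2 | h2
    · have hebf : ∀ r' : Rt (π * ι * π⁻¹), ebf ρ (π * ι * π⁻¹) r' = ebf ρ ι (ψ r') := by
        intro r'
        have hπj : π (π⁻¹ r'.1) = r'.1 := Equiv.Perm.apply_inv_self π r'.1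
        have hιr' : (π * ι * π⁻¹) r'.1 = π (ι (π⁻¹ r'.1)) := by
          conv_lhs => rw [← hπj]
          rw [conj_apply]
        rw [ebf_eq_ebv, hψdef, ebf_ψm]
        have b1 : ρ r'.1 0 = ρ (π⁻¹ r'.1) 0 := by
          conv_lhs => rw [← hπj]
          exact h2 (π⁻¹ r'.1)
        have b2 : ρ ((π * ι * π⁻¹) r'.1) 0 = ρ (ι (π⁻¹ r'.1)) 0 := by
          rw [hιr']
          exact h2 (ι (π⁻¹ r'.1))
        rw [b1, b2]
      have hprod : ∏ r' : Rt (π * ι * π⁻¹), ebf ρ (π * ι * π⁻¹) r'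
          = ∏ r : Rt ι, ebf ρ ι r := by
        rw [Finset.prod_congr rfl (fun r' _ => hebf r')]
        exact Equiv.prod_comp ψ (ebf ρ ι)
      rw [hprod]
    · have hebf : ∀ r' : Rt (π * ι * π⁻¹),
          ebf ρ (π * ι * π⁻¹) r' = ebf ρ ι (ψ r')
            * (if ρ (π⁻¹ r'.1) 0 = ρ (ι (π⁻¹ r'.1)) 0 then (-1:ℤ) else 1) := by
        intro r'
        have hπj : π (π⁻¹ r'.1) = r'.1 := Equiv.Perm.apply_inv_self π r'.1
        have hιr' : (π * ι * π⁻¹) r'.1 = π (ι (π⁻¹ r'.1)) := by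
          conv_lhs => rw [← hπj]
          rw [conj_apply]
        rw [ebf_eq_ebv, hψdef, ebf_ψm]
        have b1 : ρ r'.1 0 = !(ρ (π⁻¹ r'.1) 0) := by
          conv_lhs => rw [← hπj]
          exact h2 (π⁻¹ r'.1)
        have b2 : ρ ((π * ι * π⁻¹) r'.1) 0 = !(ρ (ι (π⁻¹ r'.1)) 0) := by
          rw [hιr']
          exact h2 (ι (π⁻¹ r'.1))
        rw [b1, b2, ebv_neg]
      have hprod : ∏ r' : Rt (π * ι * π⁻¹), ebf ρ (π * ι * π⁻¹) r'
          = (∏ r : Rt ι, ebf ρ ι r)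
            * ∏ r' : Rt (π * ι * π⁻¹),
              (if ρ (π⁻¹ r'.1) 0 = ρ (ι (π⁻¹ r'.1)) 0 then (-1:ℤ) else 1) := by
        rw [Finset.prod_congr rfl (fun r' _ => hebf r'), Finset.prod_mul_distrib]
        congr 1
        exact Equiv.prod_comp ψ (ebf ρ ι)
      rw [hprod]
      have hpm : (∏ r' : Rt (π * ι * π⁻¹),
          (if ρ (π⁻¹ r'.1) 0 = ρ (ι (π⁻¹ r'.1)) 0 then (-1:ℤ) else 1)) = 1
        ∨ (∏ r' : Rt (π * ι * π⁻¹),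
          (if ρ (π⁻¹ r'.1) 0 = ρ (ι (π⁻¹ r'.1)) 0 then (-1:ℤ) else 1)) = -1 := by
        induction (Finset.univ : Finset (Rt (π * ι * π⁻¹))) using Finset.induction_on with
        | empty => left; rfl
        | @insert a s ha ih =>
          rw [Finset.prod_insert ha]
          rcases ih with h | h <;> rw [h] <;> split_ifs <;> norm_num
      rcases hpm with h | h
      · rw [h, mul_one]
      · rw [h]
        push_cast
        rw [show ((-1 : ZMod 2)) = 1 from by decide]
        ring
  · have hι'n : ¬ FPF (π * ι * π⁻¹) := fun h => hι ((FPF_conj π ι).mp h)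
    rw [val, val, if_neg hι'n, if_neg hι]

end keyrec

/-- generic 2-group cancellation -/
theorem steps {α : Type} [Fintype α] [DecidableEq α] (f : α → ZMod 2) (κ : Type) [Fintype κ]
    [DecidableEq κ] (T : κ → α → α)
    (hinv : ∀ k x, T k (T k x) = x) (hcomm : ∀ k k' x, T k (T k' x) = T k' (T k x))
    (hf : ∀ k x, f (T k x) = f x) :
    ∑ x, f x = ∑ x ∈ Finset.univ.filter (fun x => ∀ k, T k x = x), f x := by
  classical
  have key : ∀ s : Finset κ,
      ∑ x ∈ Finset.univ.filter (fun x => ∀ k ∈ s, T k x = x), f x = ∑ x, f x := by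
    intro s
    induction s using Finset.induction_on with
    | empty => simp
    | @insert k s hk ih =>
      rw [← ih]
      have hset : Finset.univ.filter (fun x => ∀ j ∈ insert k s, T j x = x)
          = (Finset.univ.filter (fun x => ∀ j ∈ s, T j x = x)).filter (fun x => T k x = x) := by
        ext x
        simp only [Finset.mem_filter, Finset.mem_univ, true_and, Finset.mem_insert]
        constructor
        · intro h; exact ⟨fun j hj => h j (Or.inr hj), h k (Or.inl rfl)⟩
        · rintro ⟨h1, h2⟩ j hj
          rcases hj with rfl | hj
          · exact h2
          · exact h1 j hj
      rw [hset]
      set s' := Finset.univ.filter (fun x => ∀ j ∈ s, T j x = x) with hs'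
      conv_rhs => rw [← Finset.sum_filter_add_sum_filter_not s' (fun x => T k x = x)]
      have hzero : ∑ x ∈ s'.filter (fun x => ¬ T k x = x), f x = 0 := by
        refine Finset.sum_involution (fun x _ => T k x) ?_ ?_ ?_ ?_
        · intro x _
          rw [hf k x]
          exact CharTwo.add_self_eq_zero (f x)
        · intro x hx _
          simp only [Finset.mem_filter] at hx
          exact hx.2
        · intro x hx
          simp only [hs', Finset.mem_filter, Finset.mem_univ, true_and] at hx ⊢
          refine ⟨fun j hj => ?_, ?_⟩
          · rw [← hcomm k j x, hx.1 j hj]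
          · intro hcon
            have h' := congrArg (T k) hcon
            rw [hinv k (T k x), hinv k x] at h'
            exact hx.2 h' 
        · intro x _
          exact hinv k x
      rw [hzero, add_zero]
  have := key Finset.univ
  rw [← this]
  refine Finset.sum_congr ?_ (fun _ _ => rfl)
  ext x
  simp

section finalassembly

variable {q : ℕ}

def zeroV (q : ℕ) : V q := fun _ => false

lemma vadd_zero (w : V q) : vadd w (zeroV q) = w := by
  funext t; simp [vadd, zeroV]

lemma zero_vadd (w : V q) : vadd (zeroV q) w = w := by
  funext t; simp [vadd, zeroV]

lemma vadd_vadd_right (w c : V q) : vadd (vadd w c) c = w := by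
  funext t; simp only [vadd]; cases w t <;> cases c t <;> rfl

lemma vadd_cancel_left (w a : V q) : vadd w (vadd w a) = a := by
  funext t; simp only [vadd]; cases w t <;> cases a t <;> rfl

lemma vadd_right_comm (w a c : V q) : vadd (vadd w a) c = vadd (vadd w c) a := by
  funext t; simp only [vadd]; cases w t <;> cases a t <;> cases c t <;> rfl

lemma eq_zeroV_of_vadd_eq (w a : V q) (h : vadd w a = w) : a = zeroV q := by
  funext t
  have ht := congrFun h t
  simp [vadd, zeroV] at ht ⊢
  cases hw : w t <;> rw [hw] at ht <;> cases ha : a t <;> rw [ha] at ht <;> simp_all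

/-- translation permutation on `V q` -/
def trP (c : V q) : Equiv.Perm (V q) :=
  ⟨fun w => vadd w c, fun w => vadd w c, vadd_vadd_right (c := c), vadd_vadd_right (c := c)⟩

/-- translation move on `Bool × V q` -/
def tmov (c : V q) : Equiv.Perm (Bool × V q) := Equiv.prodCongr (Equiv.refl Bool) (trP c)

lemma tmov_apply (c : V q) (x : Bool × V q) : tmov c x = (x.1, vadd x.2 c) := rfl

lemma Jf_apply' (x : Bool × V q) : (Jf q : Equiv.Perm (Bool × V q)) x = (!x.1, x.2) := rfl

/-- the family of moves -/
def gmov : Option (V q) → Equiv.Perm (Bool × V q) := fun k =>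
  match k with
  | none => Jf q
  | some c => tmov c

lemma gmov_none_apply (x : Bool × V q) : gmov none x = (!x.1, x.2) := rfl

lemma gmov_some_apply (c : V q) (x : Bool × V q) : gmov (some c) x = (x.1, vadd x.2 c) := rfl

lemma gmov_sq (k : Option (V q)) : gmov k * gmov k = 1 := by
  match k with
  | none => exact Equiv.ext (fun x => Jf_Jf x)
  | some c =>
    refine Equiv.ext (fun x => ?_)
    show tmov c (tmov c x) = x
    rw [tmov_apply, tmov_apply, vadd_vadd_right]

lemma gmov_comm (k k' : Option (V q)) : gmov k * gmov k' = gmov k' * gmov k := by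
  match k, k' with
  | none, none => rfl
  | none, some c => rfl
  | some c, none => rfl
  | some c, some c' =>
    refine Equiv.ext (fun x => ?_)
    show tmov c (tmov c' x) = tmov c' (tmov c x)
    rw [tmov_apply, tmov_apply, tmov_apply, tmov_apply]
    simp only []
    rw [vadd_right_comm]

lemma conj_sq {α : Type} (g x : Equiv.Perm α) (hg : g * g = 1) :
    g * (g * x * g⁻¹) * g⁻¹ = x := by
  have hginv : g⁻¹ = g := inv_eq_of_mul_eq_one_right hg
  rw [hginv]
  calc g * (g * x * g) * g = (g * g) * x * (g * g) := by group
  _ = x := by rw [hg]; group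

lemma conj_comm_of {α : Type} (g g' x : Equiv.Perm α) (hcomm : g * g' = g' * g) :
    g * (g' * x * g'⁻¹) * g⁻¹ = g' * (g * x * g⁻¹) * g'⁻¹ := by
  calc g * (g' * x * g'⁻¹) * g⁻¹ = (g * g') * x * (g * g')⁻¹ := by group
  _ = (g' * g) * x * (g' * g)⁻¹ := by rw [hcomm]
  _ = g' * (g * x * g⁻¹) * g'⁻¹ := by group

/-- standard rows -/
def ρs (q : ℕ) : Bool × V q → V (q+1) := fun x => Fin.cons x.1 x.2

lemma ρs_bit (x : Bool × V q) : ρs q x 0 = x.1 := by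
  simp [ρs]

lemma tl_ρs (x : Bool × V q) : tl (ρs q x) = x.2 := by
  funext t
  simp [ρs, tl]

/-- candidate fixed points -/
def Ψf (q : ℕ) : V q × Bool → Equiv.Perm (Bool × V q) := fun as =>
  if as.2 then Jf q * tmov as.1 else tmov as.1

lemma Ψf_false_apply (a : V q) (x : Bool × V q) : Ψf q (a, false) x = (x.1, vadd x.2 a) := rfl

lemma Ψf_true_apply (a : V q) (x : Bool × V q) : Ψf q (a, true) x = (!x.1, vadd x.2 a) := rfl

lemma Ψf_comm (as : V q × Bool) (k : Option (V q)) :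
    gmov k * Ψf q as = Ψf q as * gmov k := by
  obtain ⟨a, s⟩ := as
  refine Equiv.ext (fun x => ?_)
  show gmov k (Ψf q (a, s) x) = Ψf q (a, s) (gmov k x)
  match k, s with
  | none, false => rfl
  | none, true => rfl
  | some c, false =>
    show (x.1, vadd (vadd x.2 a) c) = (x.1, vadd (vadd x.2 c) a)
    rw [vadd_right_comm]
  | some c, true =>
    show (!x.1, vadd (vadd x.2 a) c) = (!x.1, vadd (vadd x.2 c) a)
    rw [vadd_right_comm]

lemma Ψf_inj : Function.Injective (Ψf q) := by
  rintro ⟨a, s⟩ ⟨a', s'⟩ h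
  have h1 := DFunLike.congr_fun h (false, zeroV q)
  have ha : a = a' := by
    cases s <;> cases s' <;>
      simpa [Ψf_false_apply, Ψf_true_apply, zero_vadd, Prod.ext_iff] using h1
  have hs : s = s' := by
    cases s <;> cases s' <;>
      simpa [Ψf_false_apply, Ψf_true_apply, zero_vadd, Prod.ext_iff] using h1
  rw [ha, hs]

lemma fixed_classification (x : Equiv.Perm (Bool × V q))
    (hfix : ∀ k : Option (V q), gmov k * x * (gmov k)⁻¹ = x) :
    ∃ as, x = Ψf q as := by
  have hcomm : ∀ k, gmov k * x = x * gmov k := by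
    intro k
    have h := hfix k
    rwa [mul_inv_eq_iff_eq_mul] at h
  have hx_tr : ∀ (c : V q) (b : Bool) (w : V q),
      x (b, vadd w c) = ((x (b, w)).1, vadd (x (b, w)).2 c) := by
    intro c b w
    have h := DFunLike.congr_fun (hcomm (some c)) (b, w)
    have h1 : ((gmov (some c) * x : Equiv.Perm (Bool × V q))) (b, w) = tmov c (x (b, w)) := rfl
    have h2 : ((x * gmov (some c) : Equiv.Perm (Bool × V q))) (b, w) = x (b, vadd w c) := rfl
    rw [h1, h2] at h
    rw [← h, tmov_apply]
  have hx_J : ∀ (b : Bool) (w : V q),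
      x (!b, w) = (!(x (b, w)).1, (x (b, w)).2) := by
    intro b w
    have h := DFunLike.congr_fun (hcomm none) (b, w)
    have h1 : ((gmov none * x : Equiv.Perm (Bool × V q))) (b, w) = (!(x (b, w)).1, (x (b, w)).2) := rfl
    have h2 : ((x * gmov none : Equiv.Perm (Bool × V q))) (b, w) = x (!b, w) := rfl
    rw [h1, h2] at h
    exact h.symm
  set g0 := (x (false, zeroV q)).1 with hg0
  set a0 := (x (false, zeroV q)).2 with ha0
  have hx_eval : ∀ (b : Bool) (w : V q),
      x (b, w) = ((if b then !g0 else g0), vadd a0 w) := by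
    intro b w
    have h1 : x (b, w) = ((x (b, zeroV q)).1, vadd (x (b, zeroV q)).2 w) := by
      have := hx_tr w b (zeroV q)
      rwa [zero_vadd] at this
    cases b
    · rw [h1, ← hg0, ← ha0]
      simp
    · have h2 : x (true, zeroV q) = (!g0, a0) := hx_J false (zeroV q)
      rw [h1, h2]
      simp
  cases hg : g0
  · refine ⟨(a0, false), Equiv.ext (fun y => ?_)⟩
    obtain ⟨b, w⟩ := y
    rw [hx_eval b w, Ψf_false_apply]
    simp only []
    rw [hg]
    cases b <;> simp [vadd_comm]
  · refine ⟨(a0, true), Equiv.ext (fun y => ?_)⟩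
    obtain ⟨b, w⟩ := y
    rw [hx_eval b w, Ψf_true_apply]
    simp only []
    rw [hg]
    cases b <;> simp [vadd_comm]

end finalassembly

section valcomp

variable {q : ℕ} [LinearOrder (Bool × V q)]

lemma card_BV : Fintype.card (Bool × V q) = 2 ^ (q + 1) := by
  rw [Fintype.card_prod, Fintype.card_bool, card_V, pow_succ, mul_comm]

lemma val_conj (k : Option (V q)) (x : Equiv.Perm (Bool × V q)) :
    val q (ρs q) (gmov k * x * (gmov k)⁻¹) = val q (ρs q) x := by
  refine conj_val q (ρs q) (gmov k) ?_ ?_ x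
  · match k with
    | none =>
      refine ⟨zeroV q, fun i => ?_⟩
      rw [tl_ρs, tl_ρs, vadd_zero]
      rfl
    | some c =>
      refine ⟨c, fun i => ?_⟩
      rw [tl_ρs, tl_ρs]
      rfl
  · match k with
    | none =>
      right
      intro i
      rw [ρs_bit, ρs_bit]
      rfl
    | some c =>
      left
      intro i
      rw [ρs_bit, ρs_bit]
      rfl

lemma val_Ψ_true (a : V q) : val q (ρs q) (Ψf q (a, true)) = 0 := by
  rw [val]
  split_ifs with h
  · have hcard : Fintype.card (Rt (Ψf q (a, true))) = 2 ^ q := by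
      have h2 := card_Rt _ h
      rw [card_BV, pow_succ] at h2
      omega
    have hne : Nonempty (Rt (Ψf q (a, true))) := by
      rw [← Fintype.card_pos_iff, hcard]
      positivity
    obtain ⟨r⟩ := hne
    have hzero : ebf (ρs q) (Ψf q (a, true)) r = 0 := by
      rw [ebf_eq_ebv, ρs_bit, ρs_bit]
      have h1 : (Ψf q (a, true) r.1).1 = !(r.1.1) := rfl
      rw [h1]
      cases r.1.1 <;> rfl
    rw [Finset.prod_eq_zero (Finset.mem_univ r) hzero]
    norm_num
  · rfl

lemma Ψf_false_eq (a : V q) : Ψf q (a, false) = tmov a := rfl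

lemma tmov_FPF (a : V q) (ha : a ≠ zeroV q) : FPF (tmov a) := by
  constructor
  · rintro ⟨b, w⟩ hcon
    rw [tmov_apply] at hcon
    have h2 : vadd w a = w := congrArg Prod.snd hcon
    exact ha (eq_zeroV_of_vadd_eq w a h2)
  · intro i
    rw [tmov_apply, tmov_apply]
    simp only []
    rw [vadd_vadd_right]

lemma val_Ψ_false (a : V q) (ha : a ≠ zeroV q) :
    val q (ρs q) (Ψf q (a, false)) = 1 := by
  have hFPF : FPF (Ψf q (a, false)) := by
    rw [Ψf_false_eq]
    exact tmov_FPF a ha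
  rw [val, if_pos hFPF]
  have hcard : Fintype.card (Rt (Ψf q (a, false))) = 2 ^ q := by
    have h2 := card_Rt _ hFPF
    rw [card_BV, pow_succ] at h2
    omega
  have hrows : ρd (ρs q) (Ψf q (a, false)) = fun _ => a := by
    funext r
    show vadd (tl (ρs q r.1)) (tl (ρs q (Ψf q (a, false) r.1))) = a
    rw [tl_ρs, tl_ρs]
    show vadd r.1.2 (vadd r.1.2 a) = a
    exact vadd_cancel_left _ _
  have hAhat := Ahat_const q (Rt (Ψf q (a, false))) hcard a
  rw [hrows, Int.cast_mul, hAhat, mul_one]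
  have hebf : ∀ r : Rt (Ψf q (a, false)),
      ebf (ρs q) (Ψf q (a, false)) r = if r.1.1 then (-1 : ℤ) else 1 := by
    intro r
    rw [ebf_eq_ebv, ρs_bit, ρs_bit]
    have h1 : (Ψf q (a, false) r.1).1 = r.1.1 := rfl
    rw [h1, ebv, if_pos rfl]
  rw [Finset.prod_congr rfl (fun r _ => hebf r), Int.cast_prod]
  refine Finset.prod_eq_one (fun r _ => ?_)
  split_ifs <;> decide

lemma val_Ψ_zero : val q (ρs q) (Ψf q (zeroV q, false)) = 0 := by
  rw [val, if_neg]
  intro hFPF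
  apply hFPF.1 (false, zeroV q)
  show ((false : Bool), vadd (zeroV q) (zeroV q)) = (false, zeroV q)
  rw [vadd_zero]

lemma sum_val (hq : 1 ≤ q) : ∑ x : Equiv.Perm (Bool × V q), val q (ρs q) x = 1 := by
  rw [steps (val q (ρs q)) (Option (V q)) (fun k x => gmov k * x * (gmov k)⁻¹)
    (fun k x => conj_sq (gmov k) x (gmov_sq k))
    (fun k k' x => conj_comm_of (gmov k) (gmov k') x (gmov_comm k k'))
    (fun k x => val_conj k x)]
  have hset : (Finset.univ.filter (fun x : Equiv.Perm (Bool × V q) =>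
      ∀ k : Option (V q), gmov k * x * (gmov k)⁻¹ = x)) = Finset.image (Ψf q) Finset.univ := by
    ext x
    simp only [Finset.mem_filter, Finset.mem_univ, true_and, Finset.mem_image]
    constructor
    · intro h
      obtain ⟨as, has⟩ := fixed_classification x h
      exact ⟨as, has.symm⟩
    · rintro ⟨as, rfl⟩
      intro k
      rw [mul_inv_eq_iff_eq_mul]
      exact Ψf_comm as k
  rw [hset, Finset.sum_image (fun a _ b _ h => Ψf_inj h)]
  rw [Fintype.sum_prod_type]
  have hin : ∀ a : V q, (∑ s : Bool, val q (ρs q) (Ψf q (a, s)))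
      = (if a = zeroV q then 0 else 1) := by
    intro a
    rw [Fintype.sum_bool, val_Ψ_true a]
    by_cases ha : a = zeroV q
    · rw [if_pos ha, ha, val_Ψ_zero, zero_add]
    · rw [if_neg ha, val_Ψ_false a ha, zero_add]
  rw [Finset.sum_congr rfl (fun a _ => hin a)]
  have h1 : ∀ a : V q, (if a = zeroV q then (0 : ZMod 2) else 1)
      = 1 + (if a = zeroV q then 1 else 0) := by
    intro a
    split_ifs <;> decide
  rw [Finset.sum_congr rfl (fun a _ => h1 a), Finset.sum_add_distrib,
    Finset.sum_const, Finset.card_univ, card_V,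
    Finset.sum_ite_eq' Finset.univ (zeroV q) (fun _ => (1 : ZMod 2))]
  have h2 : (2 ^ q) • (1 : ZMod 2) = 0 := by
    rw [nsmul_eq_mul, mul_one, Nat.cast_pow,
      show ((2 : ℕ) : ZMod 2) = 0 from by decide]
    exact zero_pow (by omega)
  rw [h2, if_pos (Finset.mem_univ _), zero_add]

end valcomp

lemma sylv_eq_χ (p : ℕ) (i j : Fin (2^p)) :
    sylv p i j = χ (fun t : Fin p => Nat.testBit i.val t.val)
      (fun t : Fin p => Nat.testBit j.val t.val) := by
  rw [sylv, χ]
  have h1 : ∏ t : Fin p,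
      (if (Nat.testBit i.val t.val && Nat.testBit j.val t.val) then (-1:ℤ) else 1)
      = ∏ t ∈ Finset.range p, (if (Nat.testBit (i.val &&& j.val) t) then (-1:ℤ) else 1) := by
    rw [Fin.prod_univ_eq_prod_range (fun t =>
      (if (Nat.testBit i.val t && Nat.testBit j.val t) then (-1:ℤ) else 1)) p]
    exact Finset.prod_congr rfl (fun t _ => by rw [Nat.testBit_and])
  rw [h1, Finset.prod_ite, Finset.prod_const, Finset.prod_const_one, mul_one]

end Stmt14


/-- for every `p ≥ 2` the permanent of the full `2^p × 2^p` Sylvester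
matrix is nonzero (the anti-bunching output of `n = 2^p` bosons, one per mode, is
never suppressed). -/
theorem stmt14 (p : ℕ) (hp : 2 ≤ p) : perm (sylv p) ≠ 0 := by
  obtain ⟨q, rfl⟩ : ∃ q, p = q + 1 := ⟨p - 1, by omega⟩
  have hq : 1 ≤ q := by omega
  letI : LinearOrder (Bool × Stmt14.V q) :=
    LinearOrder.lift' (fun i => (Fintype.equivFin (Bool × Stmt14.V q)) i)
      (Fintype.equivFin (Bool × Stmt14.V q)).injective
  set bits : Fin (2^(q+1)) → Stmt14.V (q+1) :=
    fun i => (fun t : Fin (q+1) => Nat.testBit i.val t.val) with hbits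
  have hbits_inj : Function.Injective bits := by
    intro i j h
    apply Fin.ext
    apply Nat.eq_of_testBit_eq
    intro t
    by_cases ht : t < q + 1
    · exact congrFun h ⟨t, ht⟩
    · have hi : i.val < 2^t :=
        lt_of_lt_of_le i.isLt (Nat.pow_le_pow_right (by norm_num) (by omega))
      have hj : j.val < 2^t :=
        lt_of_lt_of_le j.isLt (Nat.pow_le_pow_right (by norm_num) (by omega))
      rw [Nat.testBit_eq_false_of_lt hi, Nat.testBit_eq_false_of_lt hj]
  have hbij : Function.Bijective bits :=
    (Fintype.bijective_iff_injective_and_card bits).mpr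
      ⟨hbits_inj, by rw [Fintype.card_fin, Stmt14.card_V]⟩
  set bitsEquiv : Fin (2^(q+1)) ≃ Stmt14.V (q+1) := Equiv.ofBijective bits hbij with hbe
  have hbe_apply : ∀ i, bitsEquiv i = bits i := fun i => rfl
  -- step 1 : perm = A over Fin
  have hperm : perm (sylv (q+1)) = Stmt14.A (q+1) (Fin (2^(q+1))) bits := by
    rw [perm, Stmt14.A]
    refine Fintype.sum_equiv (Equiv.equivCongr (Equiv.refl (Fin (2^(q+1)))) bitsEquiv) _ _
      (fun σ => ?_)
    refine Finset.prod_congr rfl (fun i _ => ?_)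
    have h2 : (Equiv.equivCongr (Equiv.refl (Fin (2^(q+1)))) bitsEquiv σ) i
        = bits (σ i) := rfl
    rw [h2]
    exact Stmt14.sylv_eq_χ (q+1) i (σ i)
  -- step 2 : reindex to Bool × V q
  have hsp : ∀ x : Bool × Stmt14.V q,
      ((Fin.consEquiv (fun _ : Fin (q+1) => Bool)) (x.1, x.2) : Stmt14.V (q+1)) = Stmt14.ρs q x :=
    fun x => by rfl
  set f : (Bool × Stmt14.V q) ≃ Fin (2^(q+1)) :=
    (((Equiv.prodCongr (Equiv.refl Bool) (Equiv.refl (Stmt14.V q))).trans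
      ((Fin.consEquiv (fun _ : Fin (q+1) => Bool)))).trans bitsEquiv.symm) with hf
  have hA2 : Stmt14.A (q+1) (Fin (2^(q+1))) bits
      = Stmt14.A (q+1) (Bool × Stmt14.V q) (Stmt14.ρs q) := by
    rw [Stmt14.A_reindex (q+1) (Fin (2^(q+1))) (Bool × Stmt14.V q) f bits]
    congr 1
    funext x
    show bits (f x) = Stmt14.ρs q x
    have h3 : f x = bitsEquiv.symm ((Fin.consEquiv (fun _ : Fin (q+1) => Bool)) (x.1, x.2)) := rfl
    rw [h3]
    have h4 : bits (bitsEquiv.symm ((Fin.consEquiv (fun _ : Fin (q+1) => Bool)) (x.1, x.2)))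
        = bitsEquiv (bitsEquiv.symm ((Fin.consEquiv (fun _ : Fin (q+1) => Bool)) (x.1, x.2))) := rfl
    rw [h4, Equiv.apply_symm_apply]
    exact hsp x
  -- step 3 : parity
  have hcard : Fintype.card (Bool × Stmt14.V q) = 2 ^ (q+1) := Stmt14.card_BV
  have hval : ((Stmt14.Ahat (q+1) (Bool × Stmt14.V q) (Stmt14.ρs q) : ℤ) : ZMod 2) = 1 := by
    rw [Stmt14.AhatRec2 q (Stmt14.ρs q) hcard]
    exact Stmt14.sum_val hq
  intro hcon
  have hA0 : Stmt14.A (q+1) (Bool × Stmt14.V q) (Stmt14.ρs q) = 0 := by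
    rw [← hA2, ← hperm, hcon]
  have hAhat0 : Stmt14.Ahat (q+1) (Bool × Stmt14.V q) (Stmt14.ρs q) = 0 := by
    have hspec := Stmt14.Ahat_spec (q+1) (Bool × Stmt14.V q) (Stmt14.ρs q)
    rw [hA0] at hspec
    have h2 : (2:ℤ)^(2^(q+1)-1) ≠ 0 := by positivity
    exact (mul_eq_zero.mp hspec.symm).resolve_left h2
  rw [hAhat0] at hval
  norm_num at hval
end
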